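/- arXiv:1112.4102 — 3 statements merged into one kernel-verified Lean document; each statement's English description precedes it below -/
import Mathlib

section
/- Let T₁ and T₂ be nonnegative self-adjoint operators on separable Hilbert spaces H₁ and H₂ whose spectral measures have no atoms except possibly at 0. If Ψ ∈ H₁ ⊗ H₂ lies in the orthogonal complement of (ker T₁) ⊗ H₂ + H₁ ⊗ (ker T₂), then Ψ is not an eigenvector of T₁ ⊗ T₂ for any eigenvalue m² ≥ 0; equivalently the restriction of T₁ ⊗ T₂ to the subspace (continuous part of T₁) ⊗ (continuous part of T₂) has empty point spectrum. -/
open scoped InnerProductSpace ComplexConjugate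

/-- If `T` is symmetric and positive and `⟪u, T u⟫ = 0` then `T u = 0`. -/
private lemma aux_pos_zero {E : Type*} [NormedAddCommGroup E] [InnerProductSpace ℂ E]
    (T : E →L[ℂ] E) (hsym : ∀ u v : E, ⟪T u, v⟫_ℂ = ⟪u, T v⟫_ℂ)
    (hpos : ∀ u : E, 0 ≤ (⟪u, T u⟫_ℂ).re) {u : E} (hu : (⟪u, T u⟫_ℂ).re = 0) :
    T u = 0 := by
  have key : ∀ v : E, (⟪v, T u⟫_ℂ).re = 0 := by
    intro v
    set a := (⟪v, T v⟫_ℂ).re with ha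
    set b := (⟪v, T u⟫_ℂ).re with hb
    have ha0 : 0 ≤ a := hpos v
    have hq : ∀ t : ℝ, 0 ≤ 2 * t * b + t ^ 2 * a := by
      intro t
      have h0 := hpos (u + (t : ℂ) • v)
      have hz : ⟪u, T v⟫_ℂ = conj ⟪v, T u⟫_ℂ := by
        rw [← hsym u v, ← inner_conj_symm]
      have expand : (⟪u + (t:ℂ) • v, T (u + (t:ℂ) • v)⟫_ℂ).re
          = 2 * t * b + t ^ 2 * a := by
        rw [map_add, map_smul, inner_add_left, inner_add_right, inner_add_right,
          inner_smul_left, inner_smul_right, inner_smul_left, inner_smul_right, hz]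
        simp only [Complex.add_re, Complex.mul_re, Complex.conj_re, Complex.conj_im,
          Complex.ofReal_re, Complex.ofReal_im, hu, ha, hb]
        ring
      rw [expand] at h0
      exact h0
    by_contra hbne
    have hb2 : 0 < b ^ 2 := by positivity
    have h2 : 0 < a + 1 := by linarith
    have h3 : (0:ℝ) < (a + 1) ^ 2 := by positivity
    have h1 := hq (-b / (a + 1))
    have h6 : (2 * (-b / (a + 1)) * b + (-b / (a + 1)) ^ 2 * a) * (a + 1) ^ 2
        = -(b ^ 2) * (a + 2) := by field_simp; ring
    have h7 : 0 ≤ -(b ^ 2) * (a + 2) := by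
      rw [← h6]; exact mul_nonneg h1 h3.le
    nlinarith
  have h := key (T u)
  have : ‖T u‖ ^ 2 = 0 := by
    have := inner_self_eq_norm_sq (𝕜 := ℂ) (T u)
    rw [← this]; exact h
  simpa [pow_eq_zero_iff] using this

/-- Norm bound from the Rayleigh quotient bound, for symmetric positive operators. -/
private lemma aux_norm_le {E : Type*} [NormedAddCommGroup E] [InnerProductSpace ℂ E]
    (T : E →L[ℂ] E) (hsym : ∀ u v : E, ⟪T u, v⟫_ℂ = ⟪u, T v⟫_ℂ)
    (hpos : ∀ u : E, 0 ≤ (⟪u, T u⟫_ℂ).re) {M : ℝ} (hM0 : 0 ≤ M)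
    (hM : ∀ u : E, (⟪u, T u⟫_ℂ).re ≤ M * ‖u‖ ^ 2) (u : E) : ‖T u‖ ≤ M * ‖u‖ := by
  have hpol : ∀ v : E, (⟪v, T u⟫_ℂ).re ≤ (M / 2) * (‖u‖ ^ 2 + ‖v‖ ^ 2) := by
    intro v
    have hexp : (⟪u + v, T (u + v)⟫_ℂ).re - (⟪u - v, T (u - v)⟫_ℂ).re
        = 4 * (⟪v, T u⟫_ℂ).re := by
      have hz : ⟪u, T v⟫_ℂ = conj ⟪v, T u⟫_ℂ := by
        rw [← hsym u v, ← inner_conj_symm]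
      rw [map_add, map_sub, inner_add_left, inner_add_right, inner_add_right,
        inner_sub_left, inner_sub_right, inner_sub_right, hz]
      simp only [Complex.add_re, Complex.sub_re, Complex.conj_re]
      ring
    have h1 : (⟪u + v, T (u + v)⟫_ℂ).re ≤ M * ‖u + v‖ ^ 2 := hM _
    have h2 : 0 ≤ (⟪u - v, T (u - v)⟫_ℂ).re := hpos _
    have h3 : (⟪u - v, T (u - v)⟫_ℂ).re ≤ M * ‖u - v‖ ^ 2 := hM _
    have hpar : ‖u + v‖ * ‖u + v‖ + ‖u - v‖ * ‖u - v‖ = 2 * (‖u‖ * ‖u‖ + ‖v‖ * ‖v‖) :=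
      by simpa only [sq] using parallelogram_law_with_norm ℂ u v
    nlinarith [sq_nonneg (‖u - v‖)]
  by_cases hTu : T u = 0
  · rw [hTu]
    simpa using mul_nonneg hM0 (norm_nonneg u)
  · have hTn : 0 < ‖T u‖ := norm_pos_iff.mpr hTu
    by_cases hu0 : u = 0
    · simp [hu0]
    · have hun : 0 < ‖u‖ := norm_pos_iff.mpr hu0
      have hv := hpol (((‖u‖ / ‖T u‖ : ℝ) : ℂ) • T u)
      have e1 : (⟪((‖u‖ / ‖T u‖ : ℝ) : ℂ) • T u, T u⟫_ℂ).re = ‖u‖ * ‖T u‖ := by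
        have hre : (⟪T u, T u⟫_ℂ).re = ‖T u‖ ^ 2 := inner_self_eq_norm_sq (𝕜 := ℂ) (T u)
        have him : (⟪T u, T u⟫_ℂ).im = 0 := inner_self_im (𝕜 := ℂ) (T u)
        rw [inner_smul_left, Complex.conj_ofReal, Complex.mul_re, him, hre]
        simp only [Complex.ofReal_re, Complex.ofReal_im, zero_mul, mul_zero, sub_zero]
        field_simp
      have e2 : ‖((‖u‖ / ‖T u‖ : ℝ) : ℂ) • T u‖ = ‖u‖ := by
        rw [norm_smul, Complex.norm_real, Real.norm_eq_abs, abs_div, abs_norm, abs_norm]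
        field_simp
      rw [e1, e2] at hv
      nlinarith

/-- A nonzero compact symmetric positive operator has a positive eigenvalue. -/
private lemma aux_exists_eig {E : Type*} [NormedAddCommGroup E] [InnerProductSpace ℂ E]
    [CompleteSpace E] (T : E →L[ℂ] E) (hcpt : IsCompactOperator ⇑T)
    (hsym : ∀ u v : E, ⟪T u, v⟫_ℂ = ⟪u, T v⟫_ℂ)
    (hpos : ∀ u : E, 0 ≤ (⟪u, T u⟫_ℂ).re) (hT : T ≠ 0) :
    ∃ M : ℝ, 0 < M ∧ ∃ v : E, v ≠ 0 ∧ T v = (M : ℂ) • v := by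
  -- a unit vector exists
  obtain ⟨x₀, hx₀⟩ : ∃ x₀ : E, T x₀ ≠ 0 := by
    by_contra h
    push_neg at h
    exact hT (ContinuousLinearMap.ext fun x => by simp [h x])
  have hx₀0 : x₀ ≠ 0 := fun h => hx₀ (by simp [h])
  set u₀ : E := ((‖x₀‖ : ℂ))⁻¹ • x₀ with hu₀def
  have hu₀ : ‖u₀‖ = 1 := norm_smul_inv_norm hx₀0
  set q : E → ℝ := fun x => (⟪x, T x⟫_ℂ).re with hq
  set Sset : Set ℝ := q '' Metric.sphere 0 1 with hSset
  have hne : Sset.Nonempty := ⟨q u₀, ⟨u₀, by simpa [mem_sphere_iff_norm] using hu₀, rfl⟩⟩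
  have hbdd : BddAbove Sset := by
    refine ⟨‖T‖, ?_⟩
    rintro r ⟨x, hx, rfl⟩
    have hx1 : ‖x‖ = 1 := by simpa [mem_sphere_iff_norm] using hx
    calc (⟪x, T x⟫_ℂ).re ≤ ‖⟪x, T x⟫_ℂ‖ := Complex.re_le_norm _
      _ ≤ ‖x‖ * ‖T x‖ := norm_inner_le_norm x (T x)
      _ ≤ ‖x‖ * (‖T‖ * ‖x‖) := by
          exact mul_le_mul_of_nonneg_left (T.le_opNorm x) (norm_nonneg x)
      _ = ‖T‖ := by rw [hx1]; ring
  set M : ℝ := sSup Sset with hMdef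
  have hM_ge : ∀ x : E, ‖x‖ = 1 → q x ≤ M :=
    fun x hx => le_csSup hbdd ⟨x, by simpa [mem_sphere_iff_norm] using hx, rfl⟩
  -- Rayleigh bound for all vectors
  have hMu : ∀ u : E, (⟪u, T u⟫_ℂ).re ≤ M * ‖u‖ ^ 2 := by
    intro u
    by_cases hu : u = 0
    · simp [hu]
    · have hnu : (0:ℝ) < ‖u‖ := norm_pos_iff.mpr hu
      set w : E := ((‖u‖ : ℂ))⁻¹ • u with hwdef
      have hw1 : ‖w‖ = 1 := norm_smul_inv_norm hu
      have hscale : (⟪u, T u⟫_ℂ).re = ‖u‖ ^ 2 * q w := by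
        have : u = ((‖u‖ : ℝ) : ℂ) • w := by
          rw [hwdef, smul_smul]
          rw [mul_inv_cancel₀ (by exact_mod_cast hnu.ne')]
          simp
        conv_lhs => rw [this]
        rw [map_smul, inner_smul_left, inner_smul_right, Complex.conj_ofReal]
        rw [← mul_assoc, ← Complex.ofReal_mul, ← pow_two]
        rw [Complex.mul_re, Complex.ofReal_re, Complex.ofReal_im]
        simp [hq]
      rw [hscale]
      have := hM_ge w hw1
      nlinarith
  have hM0 : 0 ≤ M := le_trans (hpos u₀) (hM_ge u₀ hu₀)
  have hMpos : 0 < M := by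
    rcases hM0.lt_or_eq with h | h
    · exact h
    · exfalso
      apply hT
      apply ContinuousLinearMap.ext
      intro x
      have h0 : (⟪x, T x⟫_ℂ).re = 0 :=
        le_antisymm (by simpa [← h] using hMu x) (hpos x)
      simpa using aux_pos_zero T hsym hpos h0
  have hTle : ∀ u : E, ‖T u‖ ≤ M * ‖u‖ := aux_norm_le T hsym hpos hM0 hMu
  -- maximizing sequence
  have hseq : ∀ n : ℕ, ∃ x : E, ‖x‖ = 1 ∧ M - 1 / (n + 1) < q x := by
    intro n
    have hlt : M - 1 / (n + 1) < M := by
      have : (0:ℝ) < 1 / (n + 1) := by positivity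
      linarith
    obtain ⟨r, ⟨x, hx, rfl⟩, hr⟩ := exists_lt_of_lt_csSup hne hlt
    exact ⟨x, by simpa [mem_sphere_iff_norm] using hx, hr⟩
  choose x hx1 hxq using hseq
  -- ‖T xₙ - M xₙ‖² → 0
  have hkey : ∀ n : ℕ, ‖T (x n) - ((M:ℝ):ℂ) • x n‖ ^ 2 ≤ 2 * M * (1 / (n + 1)) := by
    intro n
    have h1 : ‖T (x n) - ((M:ℝ):ℂ) • x n‖ ^ 2
        = ‖T (x n)‖ ^ 2 - 2 * (⟪T (x n), ((M:ℝ):ℂ) • x n⟫_ℂ).re + ‖((M:ℝ):ℂ) • x n‖ ^ 2 := by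
      exact_mod_cast norm_sub_sq (𝕜 := ℂ) (T (x n)) (((M:ℝ):ℂ) • x n)
    have h2 : (⟪T (x n), ((M:ℝ):ℂ) • x n⟫_ℂ).re = M * q (x n) := by
      have hcs : ⟪T (x n), x n⟫_ℂ = (starRingEnd ℂ) ⟪x n, T (x n)⟫_ℂ := (inner_conj_symm _ _).symm
      rw [inner_smul_right, hcs, Complex.mul_re, Complex.ofReal_re, Complex.ofReal_im,
        Complex.conj_re, Complex.conj_im]
      simp only [zero_mul, sub_zero, neg_zero, mul_zero]
      rfl
    have h3 : ‖((M:ℝ):ℂ) • x n‖ ^ 2 = M ^ 2 := by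
      rw [norm_smul, Complex.norm_real, Real.norm_eq_abs, abs_of_nonneg hM0, hx1 n]
      ring
    have h4 : ‖T (x n)‖ ^ 2 ≤ M ^ 2 := by
      have := hTle (x n)
      rw [hx1 n, mul_one] at this
      nlinarith [norm_nonneg (T (x n))]
    have h5 : M - 1 / (n + 1) < q (x n) := hxq n
    rw [h1, h2, h3]
    nlinarith
  have htends : Filter.Tendsto (fun n => T (x n) - ((M:ℝ):ℂ) • x n) Filter.atTop (nhds 0) := by
    rw [tendsto_zero_iff_norm_tendsto_zero]
    have hb : Filter.Tendsto (fun n : ℕ => Real.sqrt (2 * M * (1 / (n + 1)))) Filter.atTop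
        (nhds 0) := by
      have h1 : Filter.Tendsto (fun n : ℕ => 2 * M * (1 / (n + 1))) Filter.atTop (nhds 0) := by
        have := tendsto_one_div_add_atTop_nhds_zero_nat (𝕜 := ℝ)
        have h2 := this.const_mul (2 * M)
        simpa using h2
      have := (Real.continuous_sqrt.tendsto 0).comp h1
      simpa [Function.comp_def] using this
    apply squeeze_zero (fun n => norm_nonneg _) _ hb
    intro n
    have hn := hkey n
    have h0 : (0:ℝ) ≤ 2 * M * (1 / (n + 1)) := by positivity
    calc ‖T (x n) - ((M:ℝ):ℂ) • x n‖
        = Real.sqrt (‖T (x n) - ((M:ℝ):ℂ) • x n‖ ^ 2) := by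
          rw [Real.sqrt_sq (norm_nonneg _)]
      _ ≤ Real.sqrt (2 * M * (1 / (n + 1))) := Real.sqrt_le_sqrt hn
  -- compactness: extract convergent subsequence of T xₙ
  have hA : IsCompact (closure (⇑T '' Metric.closedBall 0 1)) :=
    hcpt.isCompact_closure_image_closedBall 1
  have hmem : ∀ n : ℕ, T (x n) ∈ closure (⇑T '' Metric.closedBall 0 1) := by
    intro n
    apply subset_closure
    exact ⟨x n, by simp [Metric.mem_closedBall, dist_zero_right, (hx1 n).le], rfl⟩
  obtain ⟨z, _, φ, hφ, hconv⟩ := hA.tendsto_subseq hmem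
  -- M xₙ(φ) → z
  have htends' : Filter.Tendsto (fun n => ((M:ℝ):ℂ) • x (φ n)) Filter.atTop (nhds z) := by
    have h1 : Filter.Tendsto (fun n => T (x (φ n)) - ((M:ℝ):ℂ) • x (φ n)) Filter.atTop
        (nhds 0) := htends.comp hφ.tendsto_atTop
    have h2 : Filter.Tendsto (fun n => T (x (φ n))) Filter.atTop (nhds z) := hconv
    have := h2.sub h1
    simpa using this
  have hMne : ((M:ℝ):ℂ) ≠ 0 := by exact_mod_cast hMpos.ne'
  set v : E := ((M:ℝ):ℂ)⁻¹ • z with hvdef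
  have hxv : Filter.Tendsto (fun n => x (φ n)) Filter.atTop (nhds v) := by
    have := htends'.const_smul (((M:ℝ):ℂ)⁻¹)
    rw [hvdef]
    simpa only [inv_smul_smul₀ hMne] using this
  have hv1 : ‖v‖ = 1 := by
    have h1 : Filter.Tendsto (fun n => ‖x (φ n)‖) Filter.atTop (nhds ‖v‖) :=
      (continuous_norm.tendsto v).comp hxv
    have h2 : Filter.Tendsto (fun n : ℕ => (1:ℝ)) Filter.atTop (nhds 1) := tendsto_const_nhds
    have : (fun n => ‖x (φ n)‖) = fun _ : ℕ => (1:ℝ) := funext fun n => hx1 (φ n)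
    rw [this] at h1
    exact (tendsto_nhds_unique h1 h2)
  refine ⟨M, hMpos, v, by simp [← norm_pos_iff, hv1], ?_⟩
  have hTv : Filter.Tendsto (fun n => T (x (φ n))) Filter.atTop (nhds (T v)) :=
    (T.continuous.tendsto v).comp hxv
  have hzv : z = ((M:ℝ):ℂ) • v := by
    rw [hvdef, smul_inv_smul₀ hMne]
  rw [← hzv]
  exact tendsto_nhds_unique hTv hconv

/-- Eigenspaces of a compact operator for nonzero eigenvalues are finite dimensional. -/
private lemma aux_findim {E : Type*} [NormedAddCommGroup E] [InnerProductSpace ℂ E]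
    [CompleteSpace E] (T : E →L[ℂ] E) (hcpt : IsCompactOperator ⇑T) {M : ℝ} (hM : 0 < M) :
    FiniteDimensional ℂ ↥(Module.End.eigenspace (↑T : E →ₗ[ℂ] E) ((M:ℝ):ℂ)) := by
  by_contra hfin
  set V := Module.End.eigenspace (↑T : E →ₗ[ℂ] E) ((M:ℝ):ℂ) with hV
  have h2 : (1:ℝ) < ‖(2:ℂ)‖ := by norm_num
  have h3 : ‖(2:ℂ)‖ < (3:ℝ) := by norm_num
  obtain ⟨f, hfR, hfsep⟩ := exists_seq_norm_le_one_le_norm_sub' h2 h3 hfin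
  have heig : ∀ n : ℕ, T ((f n : E)) = ((M:ℝ):ℂ) • (f n : E) := by
    intro n
    exact Module.End.mem_eigenspace_iff.mp (f n).2
  have hA : IsCompact (closure (⇑T '' Metric.closedBall 0 3)) :=
    hcpt.isCompact_closure_image_closedBall 3
  have hmem : ∀ n : ℕ, T ((f n : E)) ∈ closure (⇑T '' Metric.closedBall 0 3) := by
    intro n
    apply subset_closure
    refine ⟨(f n : E), ?_, rfl⟩
    rw [Metric.mem_closedBall, dist_zero_right]
    exact hfR n
  obtain ⟨z, _, φ, hφ, hconv⟩ := hA.tendsto_subseq hmem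
  have hcauchy : CauchySeq fun n => T ((f (φ n) : E)) := hconv.cauchySeq
  rw [Metric.cauchySeq_iff] at hcauchy
  obtain ⟨N, hN⟩ := hcauchy M hM
  have hd := hN N le_rfl (N + 1) (by omega)
  have hsep : M ≤ dist (T ((f (φ N) : E))) (T ((f (φ (N + 1)) : E))) := by
    rw [dist_eq_norm, heig, heig, ← smul_sub]
    rw [norm_smul, Complex.norm_real, Real.norm_eq_abs, abs_of_pos hM]
    have hne : φ N ≠ φ (N + 1) := fun h => by
      have := hφ.injective h
      omega
    have h1 : (1:ℝ) ≤ ‖f (φ N) - f (φ (N + 1))‖ := hfsep hne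
    have h2 : ‖(f (φ N) : E) - (f (φ (N + 1)) : E)‖ = ‖f (φ N) - f (φ (N + 1))‖ := by
      norm_cast
    rw [h2]
    nlinarith
  linarith [hd, hsep]

open scoped InnerProductSpace ComplexConjugate

section KDEF

variable {H₁ H₂ H : Type*}
    [NormedAddCommGroup H₁] [InnerProductSpace ℂ H₁]
    [NormedAddCommGroup H₂] [InnerProductSpace ℂ H₂] [CompleteSpace H₂]
    [NormedAddCommGroup H] [InnerProductSpace ℂ H]

/-- The conjugate-linear "partial pairing" map associated to `Φ` in a tensor-product model. -/
private noncomputable def kfun (j : H₁ →ₗ[ℂ] H₂ →ₗ[ℂ] H)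
    (hn : ∀ x y, ‖j x y‖ = ‖x‖ * ‖y‖) (Φ : H) (x : H₁) : H₂ :=
  (InnerProductSpace.toDual ℂ H₂).symm
    (LinearMap.mkContinuous ((innerSL ℂ Φ).toLinearMap.comp (j x)) (‖Φ‖ * ‖x‖)
      (fun y => by
        calc ‖((innerSL ℂ Φ).toLinearMap.comp (j x)) y‖ = ‖⟪Φ, j x y⟫_ℂ‖ := rfl
          _ ≤ ‖Φ‖ * ‖j x y‖ := norm_inner_le_norm _ _
          _ = ‖Φ‖ * ‖x‖ * ‖y‖ := by rw [hn]; ring))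

private lemma inner_kfun (j : H₁ →ₗ[ℂ] H₂ →ₗ[ℂ] H)
    (hn : ∀ x y, ‖j x y‖ = ‖x‖ * ‖y‖) (Φ : H) (x : H₁) (y : H₂) :
    ⟪kfun j hn Φ x, y⟫_ℂ = ⟪Φ, j x y⟫_ℂ := by
  rw [kfun, InnerProductSpace.toDual_symm_apply]
  rfl

private lemma kfun_norm_le (j : H₁ →ₗ[ℂ] H₂ →ₗ[ℂ] H)
    (hn : ∀ x y, ‖j x y‖ = ‖x‖ * ‖y‖) (Φ : H) (x : H₁) :
    ‖kfun j hn Φ x‖ ≤ ‖Φ‖ * ‖x‖ := by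
  rw [kfun]
  rw [LinearIsometryEquiv.norm_map]
  exact LinearMap.mkContinuous_norm_le _ (mul_nonneg (norm_nonneg _) (norm_nonneg _)) _

/-- `kfun` as a real-linear continuous map. -/
private noncomputable def kR (j : H₁ →ₗ[ℂ] H₂ →ₗ[ℂ] H)
    (hn : ∀ x y, ‖j x y‖ = ‖x‖ * ‖y‖) (Φ : H) : H₁ →L[ℝ] H₂ :=
  LinearMap.mkContinuous
    { toFun := kfun j hn Φ
      map_add' := fun x x' => by
        apply ext_inner_right ℂ
        intro y
        rw [inner_add_left, inner_kfun, inner_kfun, inner_kfun, map_add, LinearMap.add_apply,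
          inner_add_right]
      map_smul' := fun r x => by
        apply ext_inner_right ℂ
        intro y
        rw [RingHom.id_apply, inner_kfun]
        rw [← algebraMap_smul ℂ r x, map_smul, LinearMap.smul_apply,
          ← algebraMap_smul ℂ r (kfun j hn Φ x)]
        rw [inner_smul_right, inner_smul_left, inner_kfun]
        simp [Complex.coe_algebraMap, Complex.conj_ofReal] }
    ‖Φ‖ (fun x => kfun_norm_le j hn Φ x)

private lemma kR_apply (j : H₁ →ₗ[ℂ] H₂ →ₗ[ℂ] H)
    (hn : ∀ x y, ‖j x y‖ = ‖x‖ * ‖y‖) (Φ : H) (x : H₁) :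
    kR j hn Φ x = kfun j hn Φ x := rfl

end KDEF
/-- Let T₁, T₂ be nonnegative self-adjoint bounded operators on Hilbert spaces H₁, H₂ whose
spectral measures have no atoms except possibly at 0 (i.e. no nonzero eigenvalues).  The Hilbert
tensor product H₁ ⊗ H₂ is modelled by a bilinear map `j` into a Hilbert space `H` with
factorizing inner products and total range, and `S` models T₁ ⊗ T₂.  If Ψ is orthogonal to
(ker T₁) ⊗ H₂ + H₁ ⊗ (ker T₂), then Ψ is not an eigenvector of T₁ ⊗ T₂ for any eigenvalue
m² ≥ 0. -/
theorem stmt_1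
    {H₁ H₂ H : Type*}
    [NormedAddCommGroup H₁] [InnerProductSpace ℂ H₁] [CompleteSpace H₁]
    [NormedAddCommGroup H₂] [InnerProductSpace ℂ H₂] [CompleteSpace H₂]
    [NormedAddCommGroup H] [InnerProductSpace ℂ H] [CompleteSpace H]
    (T₁ : H₁ →L[ℂ] H₁) (T₂ : H₂ →L[ℂ] H₂)
    (hT₁sa : IsSelfAdjoint T₁) (hT₂sa : IsSelfAdjoint T₂)
    (hT₁pos : ∀ x, 0 ≤ (⟪x, T₁ x⟫_ℂ).re) (hT₂pos : ∀ y, 0 ≤ (⟪y, T₂ y⟫_ℂ).re)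
    (hT₁cont : ∀ (x : H₁) (lam : ℝ), lam ≠ 0 → T₁ x = (lam : ℂ) • x → x = 0)
    (hT₂cont : ∀ (y : H₂) (lam : ℝ), lam ≠ 0 → T₂ y = (lam : ℂ) • y → y = 0)
    (j : H₁ →ₗ[ℂ] H₂ →ₗ[ℂ] H)
    (hj : ∀ (x x' : H₁) (y y' : H₂), ⟪j x y, j x' y'⟫_ℂ = ⟪x, x'⟫_ℂ * ⟪y, y'⟫_ℂ)
    (hdense : Dense (↑(Submodule.span ℂ {z : H | ∃ x y, j x y = z}) : Set H))
    (S : H →L[ℂ] H) (hS : ∀ x y, S (j x y) = j (T₁ x) (T₂ y))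
    (Ψ : H)
    (hΨ : ∀ z ∈ Submodule.span ℂ
      ({z : H | ∃ x y, T₁ x = 0 ∧ j x y = z} ∪ {z : H | ∃ x y, T₂ y = 0 ∧ j x y = z}),
      ⟪z, Ψ⟫_ℂ = 0)
    (m : ℝ) (hm : 0 ≤ m) (heig : S Ψ = ((m ^ 2 : ℝ) : ℂ) • Ψ) :
    Ψ = 0 := by
  classical
  -- norms of elementary tensors
  have hn : ∀ (x : H₁) (y : H₂), ‖j x y‖ = ‖x‖ * ‖y‖ := by
    intro x y
    have h := hj x x y y
    rw [inner_self_eq_norm_sq_to_K, inner_self_eq_norm_sq_to_K, inner_self_eq_norm_sq_to_K] at h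
    have h'' : ‖j x y‖ ^ 2 = ‖x‖ ^ 2 * ‖y‖ ^ 2 := by exact_mod_cast h
    nlinarith [norm_nonneg (j x y), norm_nonneg x, norm_nonneg y,
      mul_nonneg (norm_nonneg x) (norm_nonneg y)]
  have hn' : ∀ (y : H₂) (x : H₁), ‖j.flip y x‖ = ‖y‖ * ‖x‖ := fun y x => by
    rw [LinearMap.flip_apply, hn, mul_comm]
  -- the conjugate-linear maps K, K'
  set K : H₁ → H₂ := kfun j hn Ψ with hKdef
  set K' : H₂ → H₁ := kfun j.flip hn' Ψ with hK'def
  have hKi : ∀ x y, ⟪K x, y⟫_ℂ = ⟪Ψ, j x y⟫_ℂ := fun x y => inner_kfun j hn Ψ x y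
  have hK'i : ∀ y x, ⟪K' y, x⟫_ℂ = ⟪Ψ, j x y⟫_ℂ := fun y x => by
    have := inner_kfun j.flip hn' Ψ y x
    rwa [LinearMap.flip_apply] at this
  have hKle : ∀ x, ‖K x‖ ≤ ‖Ψ‖ * ‖x‖ := fun x => kfun_norm_le j hn Ψ x
  have hK'le : ∀ y, ‖K' y‖ ≤ ‖Ψ‖ * ‖y‖ := fun y => kfun_norm_le j.flip hn' Ψ y
  -- symmetry of T₁, T₂
  have hsymT₁ : ∀ a b : H₁, ⟪T₁ a, b⟫_ℂ = ⟪a, T₁ b⟫_ℂ := fun a b => by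
    conv_lhs => rw [← hT₁sa.adjoint_eq]
    exact ContinuousLinearMap.adjoint_inner_left T₁ b a
  have hsymT₂ : ∀ a b : H₂, ⟪T₂ a, b⟫_ℂ = ⟪a, T₂ b⟫_ℂ := fun a b => by
    conv_lhs => rw [← hT₂sa.adjoint_eq]
    exact ContinuousLinearMap.adjoint_inner_left T₂ b a
  -- symmetry of S by density
  have hbase : ∀ (x x' : H₁) (y y' : H₂),
      ⟪S (j x y), j x' y'⟫_ℂ = ⟪j x y, S (j x' y')⟫_ℂ := by
    intro x x' y y'
    rw [hS, hS, hj, hj, hsymT₁, hsymT₂]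
  have hstep1 : ∀ (x : H₁) (y : H₂) (b : H), ⟪S (j x y), b⟫_ℂ = ⟪j x y, S b⟫_ℂ := by
    intro x y b
    have heq : (fun b : H => ⟪S (j x y), b⟫_ℂ) = fun b : H => ⟪j x y, S b⟫_ℂ := by
      apply Continuous.ext_on hdense
      · exact Continuous.inner continuous_const continuous_id
      · exact Continuous.inner continuous_const S.continuous
      · intro b hb
        rw [SetLike.mem_coe] at hb
        induction hb using Submodule.span_induction with
        | mem z hz =>
          obtain ⟨x', y', rfl⟩ := hz
          exact hbase x x' y y'
        | zero => simp
        | add u v hu hv hu' hv' => simp only [inner_add_right, map_add, hu', hv']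
        | smul c u hu hu' => simp only [inner_smul_right, map_smul, hu']
    exact congrFun heq b
  have hstep2 : ∀ a b : H, ⟪S a, b⟫_ℂ = ⟪a, S b⟫_ℂ := by
    intro a b
    have heq : (fun a : H => ⟪S a, b⟫_ℂ) = fun a : H => ⟪a, S b⟫_ℂ := by
      apply Continuous.ext_on hdense
      · exact Continuous.inner S.continuous continuous_const
      · exact Continuous.inner continuous_id continuous_const
      · intro a ha
        rw [SetLike.mem_coe] at ha
        induction ha using Submodule.span_induction with
        | mem z hz =>
          obtain ⟨x, y, rfl⟩ := hz
          exact hstep1 x y b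
        | zero => simp
        | add u v hu hv hu' hv' => simp only [inner_add_left, map_add, hu', hv']
        | smul c u hu hu' => simp only [inner_smul_left, map_smul, hu']
    exact congrFun heq a
  have hSΨ : ∀ u : H, ⟪Ψ, S u⟫_ℂ = ((m ^ 2 : ℝ) : ℂ) * ⟪Ψ, u⟫_ℂ := by
    intro u
    calc ⟪Ψ, S u⟫_ℂ = conj ⟪S u, Ψ⟫_ℂ := by rw [inner_conj_symm]
      _ = conj ⟪u, S Ψ⟫_ℂ := by rw [hstep2]
      _ = ⟪S Ψ, u⟫_ℂ := by rw [inner_conj_symm]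
      _ = ((m ^ 2 : ℝ) : ℂ) * ⟪Ψ, u⟫_ℂ := by
          rw [heig, inner_smul_left, Complex.conj_ofReal]
  -- the intertwining relation
  have hR1 : ∀ x : H₁, T₂ (K (T₁ x)) = ((m ^ 2 : ℝ) : ℂ) • K x := by
    intro x
    apply ext_inner_right ℂ
    intro y
    calc ⟪T₂ (K (T₁ x)), y⟫_ℂ = ⟪K (T₁ x), T₂ y⟫_ℂ := hsymT₂ _ _
      _ = ⟪Ψ, j (T₁ x) (T₂ y)⟫_ℂ := hKi _ _
      _ = ⟪Ψ, S (j x y)⟫_ℂ := by rw [hS]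
      _ = ((m ^ 2 : ℝ) : ℂ) * ⟪Ψ, j x y⟫_ℂ := hSΨ _
      _ = ((m ^ 2 : ℝ) : ℂ) * ⟪K x, y⟫_ℂ := by rw [hKi]
      _ = ⟪((m ^ 2 : ℝ) : ℂ) • K x, y⟫_ℂ := by
          rw [inner_smul_left, Complex.conj_ofReal]
  -- algebraic properties of K, K'
  have hKsmul : ∀ (c : ℂ) (x : H₁), K (c • x) = (conj c) • K x := by
    intro c x
    apply ext_inner_right ℂ
    intro y
    rw [hKi, map_smul, LinearMap.smul_apply, inner_smul_right, inner_smul_left,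
      Complex.conj_conj, hKi]
  have hK'smul : ∀ (c : ℂ) (y : H₂), K' (c • y) = (conj c) • K' y := by
    intro c y
    apply ext_inner_right ℂ
    intro x
    rw [hK'i, inner_smul_left, Complex.conj_conj, hK'i, map_smul, inner_smul_right]
  have hKadd : ∀ x x' : H₁, K (x + x') = K x + K x' := by
    intro x x'
    apply ext_inner_right ℂ
    intro y
    rw [inner_add_left, hKi, hKi, hKi, map_add, LinearMap.add_apply, inner_add_right]
  have hK'zero : K' 0 = 0 := by
    apply ext_inner_right ℂ
    intro x
    rw [hK'i]
    simp
  -- the operator D = K' ∘ T₂ ∘ K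
  set Dfun : H₁ → H₁ := fun x => K' (T₂ (K x)) with hDfun
  have hDlin_add : ∀ x x' : H₁, Dfun (x + x') = Dfun x + Dfun x' := by
    intro x x'
    apply ext_inner_right ℂ
    intro z
    rw [hDfun]
    simp only
    rw [hKadd, map_add, inner_add_left]
    have hadd' : K' (T₂ (K x) + T₂ (K x')) = K' (T₂ (K x)) + K' (T₂ (K x')) := by
      apply ext_inner_right ℂ
      intro x''
      rw [inner_add_left, hK'i, hK'i, hK'i, map_add, inner_add_right]
    rw [hadd', inner_add_left]
  have hDlin_smul : ∀ (c : ℂ) (x : H₁), Dfun (c • x) = c • Dfun x := by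
    intro c x
    rw [hDfun]
    simp only
    rw [hKsmul, map_smul, hK'smul, Complex.conj_conj]
  have hDbound : ∀ x : H₁, ‖Dfun x‖ ≤ ‖Ψ‖ * ‖T₂‖ * ‖Ψ‖ * ‖x‖ := by
    intro x
    calc ‖K' (T₂ (K x))‖ ≤ ‖Ψ‖ * ‖T₂ (K x)‖ := hK'le _
      _ ≤ ‖Ψ‖ * (‖T₂‖ * ‖K x‖) := by
          apply mul_le_mul_of_nonneg_left (T₂.le_opNorm _) (norm_nonneg Ψ)
      _ ≤ ‖Ψ‖ * (‖T₂‖ * (‖Ψ‖ * ‖x‖)) := by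
          apply mul_le_mul_of_nonneg_left _ (norm_nonneg Ψ)
          exact mul_le_mul_of_nonneg_left (hKle x) (norm_nonneg T₂)
      _ = ‖Ψ‖ * ‖T₂‖ * ‖Ψ‖ * ‖x‖ := by ring
  set D : H₁ →L[ℂ] H₁ := LinearMap.mkContinuous
    { toFun := Dfun
      map_add' := hDlin_add
      map_smul' := fun c x => hDlin_smul c x } (‖Ψ‖ * ‖T₂‖ * ‖Ψ‖) hDbound with hDdef
  have hDapp : ∀ x, D x = K' (T₂ (K x)) := fun _ => rfl
  have hDinner : ∀ x x' : H₁, ⟪D x, x'⟫_ℂ = ⟪K x', T₂ (K x)⟫_ℂ := by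
    intro x x'
    rw [hDapp]
    exact (hK'i _ x').trans (hKi x' _).symm
  -- compactness of K via finite-rank approximation
  have hΨcl : Ψ ∈ closure (↑(Submodule.span ℂ {z : H | ∃ x y, j x y = z}) : Set H) := by
    rw [hdense.closure_eq]
    trivial
  rw [mem_closure_iff_seq_limit] at hΨcl
  obtain ⟨u, humem, hulim⟩ := hΨcl
  have hcpt_span : ∀ Φ ∈ Submodule.span ℂ {z : H | ∃ x y, j x y = z},
      IsCompactOperator ⇑(kR j hn Φ) := by
    intro Φ hΦ
    induction hΦ using Submodule.span_induction with
    | mem z hz =>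
      obtain ⟨a, b, rfl⟩ := hz
      have hfe : ⇑(kR j hn (j a b)) = fun x : H₁ => ⟪x, a⟫_ℂ • b := by
        funext x
        apply ext_inner_right ℂ
        intro y
        rw [kR_apply, inner_kfun, hj, inner_smul_left, inner_conj_symm]
      rw [hfe]
      refine ⟨(fun c : ℂ => c • b) '' Metric.closedBall 0 ‖a‖, ?_, ?_⟩
      · exact (isCompact_closedBall 0 ‖a‖).image (continuous_id.smul continuous_const)
      · apply Filter.mem_of_superset (Metric.closedBall_mem_nhds (0 : H₁) one_pos)
        intro x hx
        refine ⟨⟪x, a⟫_ℂ, ?_, rfl⟩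
        rw [Metric.mem_closedBall, dist_zero_right]
        calc ‖⟪x, a⟫_ℂ‖ ≤ ‖x‖ * ‖a‖ := norm_inner_le_norm x a
          _ ≤ 1 * ‖a‖ := by
              apply mul_le_mul_of_nonneg_right _ (norm_nonneg a)
              rw [Metric.mem_closedBall, dist_zero_right] at hx
              exact hx
          _ = ‖a‖ := one_mul _
    | zero =>
      have hfe : ⇑(kR j hn (0 : H)) = fun _ : H₁ => (0 : H₂) := by
        funext x
        apply ext_inner_right ℂ
        intro y
        rw [kR_apply, inner_kfun]
        simp
      rw [hfe]
      exact isCompactOperator_zero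
    | add w v hw hv hw' hv' =>
      have hfe : ⇑(kR j hn (w + v)) = ⇑(kR j hn w) + ⇑(kR j hn v) := by
        funext x
        apply ext_inner_right ℂ
        intro y
        simp only [Pi.add_apply]
        rw [kR_apply, kR_apply, kR_apply, inner_add_left, inner_kfun, inner_kfun, inner_kfun,
          inner_add_left]
      rw [hfe]
      exact hw'.add hv'
    | smul c w hw hw' =>
      have hfe : ⇑(kR j hn (c • w)) = c • ⇑(kR j hn w) := by
        funext x
        apply ext_inner_right ℂ
        intro y
        simp only [Pi.smul_apply]
        rw [kR_apply, kR_apply, inner_kfun, inner_smul_left, ← inner_kfun j hn w x y,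
          ← inner_smul_left]
      rw [hfe]
      exact hw'.smul c
  have hdiffK : ∀ (Φ Φ' : H) (x : H₁),
      kfun j hn Φ x - kfun j hn Φ' x = kfun j hn (Φ - Φ') x := by
    intro Φ Φ' x
    apply ext_inner_right ℂ
    intro y
    rw [inner_sub_left, inner_kfun, inner_kfun, inner_kfun, inner_sub_left]
  have hbK : ∀ Φ Φ' : H, ‖kR j hn Φ - kR j hn Φ'‖ ≤ ‖Φ - Φ'‖ := by
    intro Φ Φ'
    apply ContinuousLinearMap.opNorm_le_bound _ (norm_nonneg _)
    intro x
    rw [ContinuousLinearMap.sub_apply, kR_apply, kR_apply, hdiffK]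
    exact kfun_norm_le j hn _ x
  have hlimK : Filter.Tendsto (fun n => kR j hn (u n)) Filter.atTop (nhds (kR j hn Ψ)) := by
    rw [tendsto_iff_norm_sub_tendsto_zero]
    have h1 : Filter.Tendsto (fun n => ‖u n - Ψ‖) Filter.atTop (nhds 0) :=
      tendsto_iff_norm_sub_tendsto_zero.mp hulim
    apply squeeze_zero (fun n => norm_nonneg _) _ h1
    intro n
    exact hbK (u n) Ψ
  have hKcpt : IsCompactOperator K := by
    have := isCompactOperator_of_tendsto hlimK
      (Filter.Eventually.of_forall fun n => hcpt_span (u n) (humem n))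
    exact this
  have hK'cont : Continuous K' := by
    have : K' = ⇑(kR j.flip hn' Ψ) := rfl
    rw [this]
    exact (kR j.flip hn' Ψ).continuous
  have hDcpt : IsCompactOperator ⇑D := by
    have hcomp : IsCompactOperator ((fun y : H₂ => K' (T₂ y)) ∘ K) :=
      hKcpt.continuous_comp (hK'cont.comp T₂.continuous)
    exact hcomp
  -- symmetry and positivity of D
  have hsymD : ∀ a b : H₁, ⟪D a, b⟫_ℂ = ⟪a, D b⟫_ℂ := by
    intro a b
    rw [hDinner a b]
    have h1 : ⟪a, D b⟫_ℂ = conj ⟪D b, a⟫_ℂ := by rw [inner_conj_symm]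
    rw [h1, hDinner b a]
    calc ⟪K b, T₂ (K a)⟫_ℂ = conj ⟪T₂ (K a), K b⟫_ℂ := by rw [inner_conj_symm]
      _ = conj ⟪K a, T₂ (K b)⟫_ℂ := by rw [hsymT₂]
  have hposD : ∀ a : H₁, 0 ≤ (⟪a, D a⟫_ℂ).re := by
    intro a
    have h1 : ⟪a, D a⟫_ℂ = conj ⟪D a, a⟫_ℂ := by rw [inner_conj_symm]
    rw [h1, hDinner, Complex.conj_re]
    exact hT₂pos (K a)
  -- commutation of D with T₁
  have hcomm : ∀ x : H₁, D (T₁ x) = T₁ (D x) := by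
    intro x
    apply ext_inner_right ℂ
    intro x'
    have hL : ⟪D (T₁ x), x'⟫_ℂ = ((m ^ 2 : ℝ) : ℂ) * ⟪K x', K x⟫_ℂ := by
      rw [hDinner, hR1, inner_smul_right]
    have hRt : ⟪T₁ (D x), x'⟫_ℂ = ((m ^ 2 : ℝ) : ℂ) * ⟪K x', K x⟫_ℂ := by
      rw [hsymT₁ (D x) x', hDinner x (T₁ x'), ← hsymT₂ (K (T₁ x')) (K x), hR1 x',
        inner_smul_left, Complex.conj_ofReal]
    rw [hL, hRt]
  -- kernel property
  have hker : ∀ x : H₁, T₁ x = 0 → K x = 0 := by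
    intro x hx
    apply ext_inner_right ℂ
    intro y
    rw [hKi]
    have hz := hΨ (j x y) (Submodule.subset_span (Set.mem_union_left _ ⟨x, y, hx, rfl⟩))
    have h1 : ⟪Ψ, j x y⟫_ℂ = conj ⟪j x y, Ψ⟫_ℂ := by rw [inner_conj_symm]
    rw [h1, hz]
    simp
  -- Main dichotomy: D must vanish
  by_cases hD0 : D = 0
  · -- D = 0 : then T₂ ∘ K = 0, hence K = 0 by orthogonality, hence Ψ = 0 by density
    have hTK : ∀ x : H₁, T₂ (K x) = 0 := by
      intro x
      apply aux_pos_zero T₂ hsymT₂ hT₂pos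
      have h1 : ⟪K x, T₂ (K x)⟫_ℂ = 0 := by
        rw [← hDinner x x, hD0]
        simp
      rw [h1]
      simp
    have hK0 : ∀ x : H₁, K x = 0 := by
      intro x
      have hz := hΨ (j x (K x))
        (Submodule.subset_span (Set.mem_union_right _ ⟨x, K x, hTK x, rfl⟩))
      have h1 : ⟪K x, K x⟫_ℂ = 0 := by
        rw [hKi]
        have h2 : ⟪Ψ, j x (K x)⟫_ℂ = conj ⟪j x (K x), Ψ⟫_ℂ := by rw [inner_conj_symm]
        rw [h2, hz]
        simp
      exact inner_self_eq_zero.mp h1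
    have hfun : (fun z : H => ⟪Ψ, z⟫_ℂ) = fun _ : H => (0 : ℂ) := by
      apply Continuous.ext_on hdense
      · exact Continuous.inner continuous_const continuous_id
      · exact continuous_const
      · intro z hz
        rw [SetLike.mem_coe] at hz
        induction hz using Submodule.span_induction with
        | mem w hw =>
          obtain ⟨x, y, rfl⟩ := hw
          show ⟪Ψ, j x y⟫_ℂ = 0
          rw [← hKi, hK0]
          exact inner_zero_left _
        | zero => exact inner_zero_right _
        | add p q hp hq hp' hq' => simp only [inner_add_right, hp', hq', add_zero]
        | smul c p hp hp' => simp only [inner_smul_right, hp', mul_zero]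
    have hzero : ⟪Ψ, Ψ⟫_ℂ = 0 := congrFun hfun Ψ
    exact inner_self_eq_zero.mp hzero
  · -- D ≠ 0 : contradiction with the absence of nonzero eigenvalues of T₁
    exfalso
    obtain ⟨M, hMpos, v, hv0, hveig⟩ := aux_exists_eig D hDcpt hsymD hposD hD0
    have hvV : v ∈ Module.End.eigenspace (↑D : H₁ →ₗ[ℂ] H₁) ((M : ℝ) : ℂ) :=
      Module.End.mem_eigenspace_iff.mpr hveig
    have hVfd : FiniteDimensional ℂ
        ↥(Module.End.eigenspace (↑D : H₁ →ₗ[ℂ] H₁) ((M : ℝ) : ℂ)) :=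
      aux_findim D hDcpt hMpos
    have hVnt : Nontrivial
        ↥(Module.End.eigenspace (↑D : H₁ →ₗ[ℂ] H₁) ((M : ℝ) : ℂ)) := by
      refine ⟨⟨v, hvV⟩, 0, ?_⟩
      simp only [ne_eq, Submodule.mk_eq_zero]
      exact hv0
    have hinv : ∀ x ∈ Module.End.eigenspace (↑D : H₁ →ₗ[ℂ] H₁) ((M : ℝ) : ℂ),
        T₁ x ∈ Module.End.eigenspace (↑D : H₁ →ₗ[ℂ] H₁) ((M : ℝ) : ℂ) := by
      intro x hx
      have hx' : D x = ((M : ℝ) : ℂ) • x := Module.End.mem_eigenspace_iff.mp hx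
      apply Module.End.mem_eigenspace_iff.mpr
      show D (T₁ x) = ((M : ℝ) : ℂ) • T₁ x
      rw [hcomm, hx', map_smul]
    obtain ⟨μ, hμ⟩ := Module.End.exists_eigenvalue
      ((↑T₁ : H₁ →ₗ[ℂ] H₁).restrict hinv)
    obtain ⟨w, hw⟩ := hμ.exists_hasEigenvector
    have hww : T₁ (w : H₁) = μ • (w : H₁) := by
      have h1 : (↑T₁ : H₁ →ₗ[ℂ] H₁).restrict hinv w = μ • w :=
        hw.apply_eq_smul
      have h2 := congrArg Subtype.val h1
      simpa using h2
    have hw0 : (w : H₁) ≠ 0 := by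
      intro h
      exact hw.right (Subtype.ext h)
    have hμreal : μ = ((μ.re : ℝ) : ℂ) := by
      have h1 : ⟪(w : H₁), T₁ (w : H₁)⟫_ℂ = μ * ⟪(w : H₁), (w : H₁)⟫_ℂ := by
        rw [hww, inner_smul_right]
      have h2 : ⟪T₁ (w : H₁), (w : H₁)⟫_ℂ = conj μ * ⟪(w : H₁), (w : H₁)⟫_ℂ := by
        rw [hww, inner_smul_left]
      have hc : ⟪(w : H₁), (w : H₁)⟫_ℂ ≠ 0 := fun hh => hw0 (inner_self_eq_zero.mp hh)
      have h4 : conj μ = μ := by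
        apply mul_right_cancel₀ hc
        rw [← h2, hsymT₁, h1]
      exact (Complex.conj_eq_iff_re.mp h4).symm
    by_cases hμ0 : μ.re = 0
    · have hμz : μ = 0 := by rw [hμreal, hμ0, Complex.ofReal_zero]
      have hT₁w : T₁ (w : H₁) = 0 := by rw [hww, hμz, zero_smul]
      have hKw : K (w : H₁) = 0 := hker _ hT₁w
      have hDw : D (w : H₁) = 0 := by
        rw [hDapp, hKw, map_zero, hK'zero]
      have hDw' : D (w : H₁) = ((M : ℝ) : ℂ) • (w : H₁) :=
        Module.End.mem_eigenspace_iff.mp w.2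
      rw [hDw] at hDw'
      have hMne : ((M : ℝ) : ℂ) ≠ 0 := by exact_mod_cast hMpos.ne'
      exact hw0 ((smul_eq_zero.mp hDw'.symm).resolve_left hMne)
    · apply hw0
      apply hT₁cont (w : H₁) μ.re hμ0
      rw [hww]
      exact congrArg (fun c : ℂ => c • (w : H₁)) hμreal
end

section
/- Let U : ℝ → unitary group on a Hilbert space H with self-adjoint generator A and spectral measure E, and let Ψ ∈ H. If the matrix coefficient s ↦ ⟨Ψ, U(s)Ψ⟩ is integrable over ℝ (lies in L¹(ℝ)), then the measure B ↦ ⟨Ψ, E(B)Ψ⟩ is absolutely continuous with respect to Lebesgue measure; in particular ⟨Ψ, E(B)Ψ⟩ = 0 for every Borel set B of Lebesgue measure zero. -/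
open MeasureTheory Real Filter Topology Set
open scoped ENNReal

namespace Stmt3Aux

noncomputable section

open Complex in
/-- The Gaussian integral in the form we need. -/
lemma gauss_eval {t : ℝ} (ht : 0 < t) (x lam : ℝ) :
    ∫ s : ℝ, Complex.exp (-(t : ℂ) * s ^ 2 + Complex.I * s * (x - lam)) =
      ((Real.sqrt (π / t) * Real.exp (-(x - lam) ^ 2 / (4 * t)) : ℝ) : ℂ) := by
  have hb : (-(t : ℂ)).re < 0 := by simpa using ht
  have h0 : ∀ s : ℝ, -(t : ℂ) * s ^ 2 + Complex.I * s * (x - lam) =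
      -(t : ℂ) * s ^ 2 + (Complex.I * ((x : ℂ) - lam)) * s + 0 := by intro s; ring
  simp_rw [h0]
  rw [integral_cexp_quadratic hb]
  have h1 : ((π : ℂ) / -(-(t : ℂ))) ^ (1 / 2 : ℂ) = ((Real.sqrt (π / t) : ℝ) : ℂ) := by
    rw [neg_neg, ← Complex.ofReal_div, Real.sqrt_eq_rpow,
      Complex.ofReal_cpow (by positivity)]
    norm_num
  have h2 : (0 : ℂ) - (Complex.I * ((x : ℂ) - lam)) ^ 2 / (4 * -(t : ℂ)) =
      ((-(x - lam) ^ 2 / (4 * t) : ℝ) : ℂ) := by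
    have ht' : (t : ℂ) ≠ 0 := by exact_mod_cast ht.ne'
    field_simp
    rw [Complex.I_sq]
    push_cast
    field_simp
    ring
  rw [h1, h2, ← Complex.ofReal_exp, ← Complex.ofReal_mul]

set_option maxHeartbeats 1000000 in
open Complex in
/-- Integrability of the Gaussian-modulated character on the product space. -/
lemma prod_integrable (μ : Measure ℝ) [IsFiniteMeasure μ] {t : ℝ} (ht : 0 < t) (lam : ℝ) :
    Integrable (fun p : ℝ × ℝ =>
      Complex.exp (-(t : ℂ) * p.2 ^ 2 + Complex.I * p.2 * (p.1 - lam)))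
      (μ.prod volume) := by
  have hcont : Continuous (fun p : ℝ × ℝ =>
      Complex.exp (-(t : ℂ) * p.2 ^ 2 + Complex.I * p.2 * (p.1 - lam))) := by
    fun_prop
  have hnorm : ∀ p : ℝ × ℝ,
      ‖Complex.exp (-(t : ℂ) * p.2 ^ 2 + Complex.I * p.2 * (p.1 - lam))‖ =
        Real.exp (-t * p.2 ^ 2) := by
    intro p
    have h : -(t : ℂ) * p.2 ^ 2 + Complex.I * p.2 * (p.1 - lam) =
        ((-t * p.2 ^ 2 : ℝ) : ℂ) + ((p.2 * (p.1 - lam) : ℝ) : ℂ) * Complex.I := by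
      push_cast; ring
    rw [h, Complex.norm_exp]
    congr 1
    rw [Complex.add_re, Complex.ofReal_re, Complex.mul_I_re, Complex.ofReal_im, neg_zero,
      add_zero]
  rw [integrable_prod_iff hcont.aestronglyMeasurable]
  constructor
  · refine ae_of_all _ fun x => ?_
    have hexp : ∀ s : ℝ, -(t : ℂ) * (s : ℂ) ^ 2 + Complex.I * (s : ℂ) * ((x : ℂ) - (lam : ℂ))
        = -(t : ℂ) * (s : ℂ) ^ 2 + (Complex.I * ((x : ℂ) - (lam : ℂ))) * (s : ℂ) + 0 := by
      intro s; ring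
    simp only [hexp]
    exact integrable_cexp_quadratic (by simpa using ht) _ _
  · have heq : (fun x : ℝ => ∫ s : ℝ,
        ‖Complex.exp (-(t : ℂ) * s ^ 2 + Complex.I * s * (x - lam))‖) =
        fun _ : ℝ => ∫ s : ℝ, Real.exp (-t * s ^ 2) := by
      funext x
      exact integral_congr_ae (ae_of_all _ fun s => hnorm (x, s))
    rw [heq]
    exact integrable_const _

open Complex in
/-- Key bound: the Gaussian-smoothed measure has density bounded by `∫ ‖φ‖`. -/
lemma smooth_bound (μ : Measure ℝ) [IsFiniteMeasure μ]
    (hint : Integrable (fun s : ℝ => ∫ lam : ℝ, Complex.exp (Complex.I * s * lam) ∂μ))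
    {t : ℝ} (ht : 0 < t) (lam : ℝ) :
    ∫ x, Real.sqrt (π / t) * Real.exp (-(x - lam) ^ 2 / (4 * t)) ∂μ ≤
      ∫ s : ℝ, ‖∫ y : ℝ, Complex.exp (Complex.I * s * y) ∂μ‖ := by
  set φ : ℝ → ℂ := fun s => ∫ y : ℝ, Complex.exp (Complex.I * s * y) ∂μ with hφ
  -- complex version of the LHS
  have key : ((∫ x, Real.sqrt (π / t) * Real.exp (-(x - lam) ^ 2 / (4 * t)) ∂μ : ℝ) : ℂ) =
      ∫ s : ℝ, φ s * Complex.exp (-(t : ℂ) * s ^ 2 - Complex.I * s * lam) := by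
    have h0 : ((∫ x, Real.sqrt (π / t) * Real.exp (-(x - lam) ^ 2 / (4 * t)) ∂μ : ℝ) : ℂ) =
        ∫ x, ((Real.sqrt (π / t) * Real.exp (-(x - lam) ^ 2 / (4 * t)) : ℝ) : ℂ) ∂μ :=
      integral_ofReal.symm
    rw [h0]
    have h1 : ∀ x : ℝ, ((Real.sqrt (π / t) * Real.exp (-(x - lam) ^ 2 / (4 * t)) : ℝ) : ℂ) =
        ∫ s : ℝ, Complex.exp (-(t : ℂ) * s ^ 2 + Complex.I * s * (x - lam)) := fun x =>
      (gauss_eval ht x lam).symm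
    simp_rw [h1]
    rw [MeasureTheory.integral_integral_swap (prod_integrable μ ht lam)]
    congr 1
    funext s
    rw [hφ]
    rw [← integral_mul_const]
    congr 1
    funext x
    rw [← Complex.exp_add]
    congr 1
    push_cast
    ring
  -- norm bound for the RHS
  have hφm : AEStronglyMeasurable φ volume := hint.1
  have hmul : Integrable (fun s : ℝ => φ s * Complex.exp (-(t : ℂ) * s ^ 2 - Complex.I * s * lam))
      volume := by
    refine hint.norm.mono' (hφm.mul (Continuous.aestronglyMeasurable (by fun_prop)))
        (ae_of_all _ fun s => ?_)
    rw [norm_mul]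
    have hb1 : ‖Complex.exp (-(t : ℂ) * s ^ 2 - Complex.I * s * lam)‖ ≤ 1 := by
      have h : -(t : ℂ) * s ^ 2 - Complex.I * s * lam =
          ((-t * s ^ 2 : ℝ) : ℂ) + ((-(s * lam) : ℝ) : ℂ) * Complex.I := by
        push_cast; ring
      rw [h, Complex.norm_exp]
      have hre : (((-t * s ^ 2 : ℝ) : ℂ) + ((-(s * lam) : ℝ) : ℂ) * Complex.I).re
          = -t * s ^ 2 := by
        rw [Complex.add_re, Complex.ofReal_re, Complex.mul_I_re, Complex.ofReal_im, neg_zero,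
          add_zero]
      rw [hre, Real.exp_le_one_iff]
      nlinarith [sq_nonneg s, ht.le]
    calc ‖φ s‖ * ‖Complex.exp (-(t : ℂ) * s ^ 2 - Complex.I * s * lam)‖
        ≤ ‖φ s‖ * 1 := by gcongr
      _ = ‖φ s‖ := mul_one _
  calc ∫ x, Real.sqrt (π / t) * Real.exp (-(x - lam) ^ 2 / (4 * t)) ∂μ
      = (((∫ x, Real.sqrt (π / t) * Real.exp (-(x - lam) ^ 2 / (4 * t)) ∂μ : ℝ) : ℂ)).re := by
        simp
    _ = (∫ s : ℝ, φ s * Complex.exp (-(t : ℂ) * s ^ 2 - Complex.I * s * lam)).re := by rw [key]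
    _ ≤ ‖∫ s : ℝ, φ s * Complex.exp (-(t : ℂ) * s ^ 2 - Complex.I * s * lam)‖ :=
        Complex.re_le_norm _
    _ ≤ ∫ s : ℝ, ‖φ s * Complex.exp (-(t : ℂ) * s ^ 2 - Complex.I * s * lam)‖ :=
        norm_integral_le_integral_norm _
    _ ≤ ∫ s : ℝ, ‖φ s‖ := by
        refine integral_mono hmul.norm hint.norm fun s => ?_
        simp only [norm_norm]
        rw [norm_mul]
        have hb1 : ‖Complex.exp (-(t : ℂ) * s ^ 2 - Complex.I * s * lam)‖ ≤ 1 := by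
          have h : -(t : ℂ) * s ^ 2 - Complex.I * s * lam =
              ((-t * s ^ 2 : ℝ) : ℂ) + ((-(s * lam) : ℝ) : ℂ) * Complex.I := by
            push_cast; ring
          rw [h, Complex.norm_exp]
          have hre : (((-t * s ^ 2 : ℝ) : ℂ) + ((-(s * lam) : ℝ) : ℂ) * Complex.I).re
              = -t * s ^ 2 := by
            rw [Complex.add_re, Complex.ofReal_re, Complex.mul_I_re, Complex.ofReal_im,
              neg_zero, add_zero]
          rw [hre, Real.exp_le_one_iff]
          nlinarith [sq_nonneg s, ht.le]
        calc ‖φ s‖ * ‖Complex.exp (-(t : ℂ) * s ^ 2 - Complex.I * s * lam)‖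
            ≤ ‖φ s‖ * 1 := by gcongr
          _ = ‖φ s‖ := mul_one _

/-- The Gaussian kernel integrand is integrable wrt any finite measure. -/
lemma kernel_integrable (ν : Measure ℝ) [IsFiniteMeasure ν] {t : ℝ} (ht : 0 < t) (lam : ℝ) :
    Integrable (fun x : ℝ => Real.sqrt (π / t) * Real.exp (-(x - lam) ^ 2 / (4 * t))) ν := by
  refine (integrable_const (Real.sqrt (π / t))).mono'
      (Continuous.aestronglyMeasurable (by fun_prop)) (ae_of_all _ fun x => ?_)
  rw [Real.norm_eq_abs, abs_of_nonneg (by positivity)]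
  have h1 : Real.exp (-(x - lam) ^ 2 / (4 * t)) ≤ 1 := by
    rw [Real.exp_le_one_iff]
    exact div_nonpos_of_nonpos_of_nonneg (by nlinarith [sq_nonneg (x - lam)]) (by linarith)
  nlinarith [Real.sqrt_nonneg (π / t), Real.exp_pos (-(x - lam) ^ 2 / (4 * t))]

/-- Fubini/Tonelli bound for the smoothed measure integrated over a set `U`. -/
lemma tonelli_bound (μ : Measure ℝ) [IsFiniteMeasure μ]
    (hint : Integrable (fun s : ℝ => ∫ lam : ℝ, Complex.exp (Complex.I * s * lam) ∂μ))
    {t : ℝ} (ht : 0 < t) (U : Set ℝ) :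
    ∫⁻ x, (∫⁻ lam in U,
        ENNReal.ofReal (Real.sqrt (π / t) * Real.exp (-(x - lam) ^ 2 / (4 * t)))) ∂μ ≤
      ENNReal.ofReal (∫ s : ℝ, ‖∫ y : ℝ, Complex.exp (Complex.I * s * y) ∂μ‖) * volume U := by
  have hmeas : Measurable (fun p : ℝ × ℝ =>
      ENNReal.ofReal (Real.sqrt (π / t) * Real.exp (-(p.1 - p.2) ^ 2 / (4 * t)))) := by
    apply Measurable.ennreal_ofReal
    fun_prop
  rw [lintegral_lintegral_swap (μ := μ) (ν := volume.restrict U)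
    (f := fun x lam => ENNReal.ofReal (Real.sqrt (π / t) * Real.exp (-(x - lam) ^ 2 / (4 * t))))
    hmeas.aemeasurable]
  calc ∫⁻ lam in U, (∫⁻ x,
        ENNReal.ofReal (Real.sqrt (π / t) * Real.exp (-(x - lam) ^ 2 / (4 * t))) ∂μ)
      ≤ ∫⁻ _ in U, ENNReal.ofReal (∫ s : ℝ, ‖∫ y : ℝ, Complex.exp (Complex.I * s * y) ∂μ‖) := by
        refine setLIntegral_mono measurable_const fun lam _ => ?_
        rw [← ofReal_integral_eq_lintegral_ofReal (kernel_integrable μ ht lam)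
            (ae_of_all _ fun x => by positivity)]
        exact ENNReal.ofReal_le_ofReal (smooth_bound μ hint ht lam)
    _ = ENNReal.ofReal (∫ s : ℝ, ‖∫ y : ℝ, Complex.exp (Complex.I * s * y) ∂μ‖) * volume U :=
        setLIntegral_const U _

/-- Change of variables: the Gaussian integral over a symmetric interval around `x`. -/
lemma cov {t : ℝ} (ht : 0 < t) (x δ : ℝ) :
    ∫ lam in Ioo (x - δ) (x + δ), Real.sqrt (π / t) * Real.exp (-(x - lam) ^ 2 / (4 * t)) =
      2 * Real.sqrt π * ∫ z in Ioo (-(δ / (2 * Real.sqrt t))) (δ / (2 * Real.sqrt t)),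
        Real.exp (-z ^ 2) := by
  have hstpos : 0 < Real.sqrt t := Real.sqrt_pos.mpr ht
  have hcpos : (0:ℝ) < 2 * Real.sqrt t := by linarith
  have hcsq : (2 * Real.sqrt t) ^ 2 = 4 * t := by
    rw [mul_pow, Real.sq_sqrt ht.le]; ring
  -- translation
  have h1 : ∫ lam in Ioo (x - δ) (x + δ),
      Real.sqrt (π / t) * Real.exp (-(x - lam) ^ 2 / (4 * t)) =
      ∫ y, (Ioo (-δ) δ).indicator
        (fun y => Real.sqrt (π / t) * Real.exp (-y ^ 2 / (4 * t))) y := by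
    rw [← integral_indicator measurableSet_Ioo, ← integral_sub_right_eq_self
      (fun y => (Ioo (-δ) δ).indicator
        (fun y => Real.sqrt (π / t) * Real.exp (-y ^ 2 / (4 * t))) y) x]
    congr 1
    funext lam
    by_cases h : lam ∈ Ioo (x - δ) (x + δ)
    · have h' : lam - x ∈ Ioo (-δ) δ := by
        simp only [mem_Ioo] at h ⊢; exact ⟨by linarith [h.1], by linarith [h.2]⟩
      rw [indicator_of_mem h, indicator_of_mem h']
      have he : -(x - lam) ^ 2 = -(lam - x) ^ 2 := by ring
      rw [he]
    · have h' : lam - x ∉ Ioo (-δ) δ := by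
        simp only [mem_Ioo] at h ⊢
        intro h1'
        exact absurd ⟨by linarith [h1'.1], by linarith [h1'.2]⟩ h
      rw [indicator_of_notMem h, indicator_of_notMem h']
  -- pointwise identity for scaling
  have h3 : ∀ z : ℝ, (Ioo (-δ) δ).indicator
      (fun y => Real.sqrt (π / t) * Real.exp (-y ^ 2 / (4 * t))) (2 * Real.sqrt t * z) =
      (Ioo (-(δ / (2 * Real.sqrt t))) (δ / (2 * Real.sqrt t))).indicator
        (fun z => Real.sqrt (π / t) * Real.exp (-z ^ 2)) z := by
    intro z
    have hmem : 2 * Real.sqrt t * z ∈ Ioo (-δ) δ ↔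
        z ∈ Ioo (-(δ / (2 * Real.sqrt t))) (δ / (2 * Real.sqrt t)) := by
      simp only [mem_Ioo, ← neg_div, div_lt_iff₀ hcpos, lt_div_iff₀ hcpos,
        mul_comm z (2 * Real.sqrt t)]
    have hval : Real.sqrt (π / t) * Real.exp (-(2 * Real.sqrt t * z) ^ 2 / (4 * t)) =
        Real.sqrt (π / t) * Real.exp (-z ^ 2) := by
      congr 1
      rw [mul_pow, hcsq]
      field_simp
    by_cases h : z ∈ Ioo (-(δ / (2 * Real.sqrt t))) (δ / (2 * Real.sqrt t))
    · rw [indicator_of_mem (hmem.mpr h), indicator_of_mem h]; exact hval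
    · rw [indicator_of_notMem (fun hh => h (hmem.mp hh)), indicator_of_notMem h]
  have h2 := MeasureTheory.Measure.integral_comp_mul_left ((Ioo (-δ) δ).indicator
      (fun y => Real.sqrt (π / t) * Real.exp (-y ^ 2 / (4 * t)))) (2 * Real.sqrt t)
  simp only [h3] at h2
  rw [integral_indicator measurableSet_Ioo, abs_of_pos (inv_pos.mpr hcpos), smul_eq_mul] at h2
  rw [h1]
  have h4 : ∫ y, (Ioo (-δ) δ).indicator
      (fun y => Real.sqrt (π / t) * Real.exp (-y ^ 2 / (4 * t))) y =
      2 * Real.sqrt t * ∫ z in Ioo (-(δ / (2 * Real.sqrt t))) (δ / (2 * Real.sqrt t)),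
        Real.sqrt (π / t) * Real.exp (-z ^ 2) := by
    rw [h2]
    field_simp
  rw [h4, integral_const_mul]
  rw [Real.sqrt_div Real.pi_pos.le]
  field_simp

/-- The sequence of widths. -/
lemma tendsto_r (δ : ℝ) (hδ : 0 < δ) :
    Filter.Tendsto (fun n : ℕ => δ / (2 * Real.sqrt (1 / ((n : ℝ) + 1)))) atTop atTop := by
  have hg0 : Filter.Tendsto (fun n : ℕ => 2 * Real.sqrt (1 / ((n : ℝ) + 1))) atTop (𝓝 0) := by
    have h1 : Filter.Tendsto (fun n : ℕ => (1 : ℝ) / ((n : ℝ) + 1)) atTop (𝓝 0) :=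
      tendsto_one_div_add_atTop_nhds_zero_nat
    have h2 : Filter.Tendsto (fun n : ℕ => Real.sqrt (1 / ((n : ℝ) + 1))) atTop (𝓝 0) := by
      have h := (Real.continuous_sqrt.tendsto 0).comp h1
      rw [Real.sqrt_zero] at h
      exact h
    have h3 := Filter.Tendsto.const_mul (2 : ℝ) h2
    rw [mul_zero] at h3
    exact h3
  have hgpos : ∀ n : ℕ, (0:ℝ) < 2 * Real.sqrt (1 / ((n : ℝ) + 1)) := by
    intro n
    have : (0:ℝ) < 1 / ((n : ℝ) + 1) := by positivity
    have := Real.sqrt_pos.mpr this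
    linarith
  have hginv : Filter.Tendsto (fun n : ℕ => (2 * Real.sqrt (1 / ((n : ℝ) + 1)))⁻¹)
      atTop atTop := by
    apply Filter.Tendsto.inv_tendsto_nhdsGT_zero
    rw [tendsto_nhdsWithin_iff]
    exact ⟨hg0, Filter.Eventually.of_forall fun n => hgpos n⟩
  have := hginv.const_mul_atTop hδ
  simpa only [div_eq_mul_inv] using this

/-- Convergence of the smoothed mass of an interval to `2π`. -/
lemma tendsto_aux (x δ : ℝ) (hδ : 0 < δ) :
    Filter.Tendsto (fun n : ℕ => ∫ lam in Ioo (x - δ) (x + δ),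
      Real.sqrt (π / (1 / ((n : ℝ) + 1))) *
        Real.exp (-(x - lam) ^ 2 / (4 * (1 / ((n : ℝ) + 1))))) atTop (𝓝 (2 * π)) := by
  have ht : ∀ n : ℕ, (0:ℝ) < 1 / ((n : ℝ) + 1) := fun n => by positivity
  have hcov : ∀ n : ℕ, ∫ lam in Ioo (x - δ) (x + δ),
      Real.sqrt (π / (1 / ((n : ℝ) + 1))) *
        Real.exp (-(x - lam) ^ 2 / (4 * (1 / ((n : ℝ) + 1)))) =
      2 * Real.sqrt π * ∫ z in Ioo (-(δ / (2 * Real.sqrt (1 / ((n : ℝ) + 1)))))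
        (δ / (2 * Real.sqrt (1 / ((n : ℝ) + 1)))), Real.exp (-z ^ 2) :=
    fun n => cov (ht n) x δ
  simp only [hcov]
  have hint2 : Integrable (fun z : ℝ => Real.exp (-z ^ 2)) := by
    have := integrable_exp_neg_mul_sq (one_pos)
    simpa using this
  have hr := tendsto_r δ hδ
  have hrpos : ∀ n : ℕ, (0:ℝ) < δ / (2 * Real.sqrt (1 / ((n : ℝ) + 1))) := by
    intro n
    have h1 : (0:ℝ) < 1 / ((n : ℝ) + 1) := ht n
    have h2 := Real.sqrt_pos.mpr h1
    positivity
  have hrneg : Filter.Tendsto (fun n : ℕ => -(δ / (2 * Real.sqrt (1 / ((n : ℝ) + 1)))))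
      atTop atBot := tendsto_neg_atTop_atBot.comp hr
  have hlim0 := intervalIntegral_tendsto_integral hint2 hrneg hr
  have hgauss : ∫ z : ℝ, Real.exp (-z ^ 2) = Real.sqrt π := by
    have := integral_gaussian 1
    simpa using this
  have heq : ∀ n : ℕ, ∫ z in (-(δ / (2 * Real.sqrt (1 / ((n : ℝ) + 1)))))..(
        δ / (2 * Real.sqrt (1 / ((n : ℝ) + 1)))), Real.exp (-z ^ 2) =
      ∫ z in Ioo (-(δ / (2 * Real.sqrt (1 / ((n : ℝ) + 1)))))
        (δ / (2 * Real.sqrt (1 / ((n : ℝ) + 1)))), Real.exp (-z ^ 2) := by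
    intro n
    rw [intervalIntegral.integral_of_le (by linarith [hrpos n]),
      integral_Ioc_eq_integral_Ioo]
  simp only [heq, hgauss] at hlim0
  have hfin := Filter.Tendsto.const_mul (2 * Real.sqrt π) hlim0
  have h2π : 2 * Real.sqrt π * Real.sqrt π = 2 * π := by
    rw [mul_assoc, Real.mul_self_sqrt Real.pi_pos.le]
  rw [h2π] at hfin
  exact hfin

/-- Kernel integrability, other orientation. -/
lemma kernel_integrable' (ν : Measure ℝ) [IsFiniteMeasure ν] {t : ℝ} (ht : 0 < t) (a : ℝ) :
    Integrable (fun y : ℝ => Real.sqrt (π / t) * Real.exp (-(a - y) ^ 2 / (4 * t))) ν := by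
  refine (integrable_const (Real.sqrt (π / t))).mono'
      (Continuous.aestronglyMeasurable (by fun_prop)) (ae_of_all _ fun y => ?_)
  rw [Real.norm_eq_abs, abs_of_nonneg (by positivity)]
  have h1 : Real.exp (-(a - y) ^ 2 / (4 * t)) ≤ 1 := by
    rw [Real.exp_le_one_iff]
    exact div_nonpos_of_nonpos_of_nonneg (by nlinarith [sq_nonneg (a - y)]) (by linarith)
  nlinarith [Real.sqrt_nonneg (π / t), Real.exp_pos (-(a - y) ^ 2 / (4 * t))]

/-- Pointwise lower bound on the liminf of the smoothed masses at a point of an open set. -/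
lemma liminf_lower {U : Set ℝ} (hU : IsOpen U) {x : ℝ} (hx : x ∈ U) :
    ENNReal.ofReal (2 * π) ≤ Filter.liminf (fun n : ℕ =>
      ∫⁻ lam in U, ENNReal.ofReal (Real.sqrt (π / (1 / ((n : ℝ) + 1))) *
        Real.exp (-(x - lam) ^ 2 / (4 * (1 / ((n : ℝ) + 1)))))) atTop := by
  obtain ⟨δ, hδpos, hδsub⟩ : ∃ δ > 0, Ioo (x - δ) (x + δ) ⊆ U := by
    rcases Metric.isOpen_iff.1 hU x hx with ⟨ε, hε, hball⟩
    exact ⟨ε, hε, by rwa [Real.ball_eq_Ioo] at hball⟩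
  have ht : ∀ n : ℕ, (0:ℝ) < 1 / ((n : ℝ) + 1) := fun n => by positivity
  haveI hfin : IsFiniteMeasure (volume.restrict (Ioo (x - δ) (x + δ))) := by
    constructor
    rw [Measure.restrict_apply_univ]
    exact measure_Ioo_lt_top
  have hmono : ∀ n : ℕ, ENNReal.ofReal (∫ lam in Ioo (x - δ) (x + δ),
      Real.sqrt (π / (1 / ((n : ℝ) + 1))) *
        Real.exp (-(x - lam) ^ 2 / (4 * (1 / ((n : ℝ) + 1))))) ≤
      ∫⁻ lam in U, ENNReal.ofReal (Real.sqrt (π / (1 / ((n : ℝ) + 1))) *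
        Real.exp (-(x - lam) ^ 2 / (4 * (1 / ((n : ℝ) + 1))))) := by
    intro n
    rw [ofReal_integral_eq_lintegral_ofReal (kernel_integrable' _ (ht n) x)
      (ae_of_all _ fun y => by positivity)]
    exact lintegral_mono_set hδsub
  have htendsto : Filter.Tendsto (fun n : ℕ => ENNReal.ofReal (∫ lam in Ioo (x - δ) (x + δ),
      Real.sqrt (π / (1 / ((n : ℝ) + 1))) *
        Real.exp (-(x - lam) ^ 2 / (4 * (1 / ((n : ℝ) + 1)))))) atTop
      (𝓝 (ENNReal.ofReal (2 * π))) :=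
    (ENNReal.continuous_ofReal.tendsto _).comp (tendsto_aux x δ hδpos)
  calc ENNReal.ofReal (2 * π)
      = Filter.liminf (fun n : ℕ => ENNReal.ofReal (∫ lam in Ioo (x - δ) (x + δ),
          Real.sqrt (π / (1 / ((n : ℝ) + 1))) *
            Real.exp (-(x - lam) ^ 2 / (4 * (1 / ((n : ℝ) + 1)))))) atTop :=
        htendsto.liminf_eq.symm
    _ ≤ Filter.liminf (fun n : ℕ =>
        ∫⁻ lam in U, ENNReal.ofReal (Real.sqrt (π / (1 / ((n : ℝ) + 1))) *
          Real.exp (-(x - lam) ^ 2 / (4 * (1 / ((n : ℝ) + 1)))))) atTop :=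
        Filter.liminf_le_liminf (Filter.Eventually.of_forall hmono)

/-- The main bound: for every open set `U`, `2π · μ U ≤ (∫‖φ‖) · vol U`. -/
lemma open_bound (μ : Measure ℝ) [IsFiniteMeasure μ]
    (hint : Integrable (fun s : ℝ => ∫ lam : ℝ, Complex.exp (Complex.I * s * lam) ∂μ))
    {U : Set ℝ} (hU : IsOpen U) :
    ENNReal.ofReal (2 * π) * μ U ≤
      ENNReal.ofReal (∫ s : ℝ, ‖∫ y : ℝ, Complex.exp (Complex.I * s * y) ∂μ‖) * volume U := by
  have ht : ∀ n : ℕ, (0:ℝ) < 1 / ((n : ℝ) + 1) := fun n => by positivity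
  set H : ℕ → ℝ → ℝ≥0∞ := fun n x => ∫⁻ lam in U, ENNReal.ofReal
    (Real.sqrt (π / (1 / ((n : ℝ) + 1))) *
      Real.exp (-(x - lam) ^ 2 / (4 * (1 / ((n : ℝ) + 1))))) with hH
  have hHmeas : ∀ n, Measurable (H n) := by
    intro n
    apply Measurable.lintegral_prod_right' (f := fun p : ℝ × ℝ => ENNReal.ofReal
      (Real.sqrt (π / (1 / ((n : ℝ) + 1))) *
        Real.exp (-(p.1 - p.2) ^ 2 / (4 * (1 / ((n : ℝ) + 1))))))
    apply Measurable.ennreal_ofReal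
    fun_prop
  have hbound : ∀ n : ℕ, ∫⁻ x, H n x ∂μ ≤
      ENNReal.ofReal (∫ s : ℝ, ‖∫ y : ℝ, Complex.exp (Complex.I * s * y) ∂μ‖) * volume U :=
    fun n => tonelli_bound μ hint (ht n) U
  calc ENNReal.ofReal (2 * π) * μ U
      = ∫⁻ _ in U, ENNReal.ofReal (2 * π) ∂μ := (setLIntegral_const U _).symm
    _ ≤ ∫⁻ x in U, Filter.liminf (fun n => H n x) atTop ∂μ :=
        setLIntegral_mono (Measurable.liminf hHmeas) fun x hx => liminf_lower hU hx
    _ ≤ ∫⁻ x, Filter.liminf (fun n => H n x) atTop ∂μ := setLIntegral_le_lintegral _ _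
    _ ≤ Filter.liminf (fun n => ∫⁻ x, H n x ∂μ) atTop := lintegral_liminf_le hHmeas
    _ ≤ Filter.liminf (fun _ : ℕ =>
          ENNReal.ofReal (∫ s : ℝ, ‖∫ y : ℝ, Complex.exp (Complex.I * s * y) ∂μ‖) * volume U)
          atTop := Filter.liminf_le_liminf (Filter.Eventually.of_forall hbound)
    _ = ENNReal.ofReal (∫ s : ℝ, ‖∫ y : ℝ, Complex.exp (Complex.I * s * y) ∂μ‖) * volume U :=
        Filter.liminf_const _

end

end Stmt3Aux

/-- If the Fourier transform s ↦ ∫ e^{isλ} dμ(λ) of a finite measure μ on ℝ (the matrix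
coefficient s ↦ ⟨Ψ, U(s)Ψ⟩ of a unitary group) is integrable on ℝ, then μ is absolutely
continuous with respect to Lebesgue measure; in particular μ(B) = 0 for every Borel set B of
Lebesgue measure zero. -/
theorem stmt_3 (μ : Measure ℝ) [IsFiniteMeasure μ]
    (hint : Integrable (fun s : ℝ => ∫ lam : ℝ, Complex.exp (Complex.I * s * lam) ∂μ)) :
    μ ≪ volume ∧ ∀ B : Set ℝ, MeasurableSet B → volume B = 0 → μ B = 0 := by
  have hnull : ∀ B : Set ℝ, volume B = 0 → μ B = 0 := by
    intro B hB
    set C := ENNReal.ofReal (∫ s : ℝ, ‖∫ y : ℝ, Complex.exp (Complex.I * s * y) ∂μ‖) with hC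
    have hkey : ∀ n : ℕ, ENNReal.ofReal (2 * Real.pi) * μ B ≤ C * ((n : ℝ≥0∞))⁻¹ := by
      intro n
      have hpos : (0:ℝ≥0∞) < ((n : ℝ≥0∞))⁻¹ :=
        ENNReal.inv_pos.mpr (ENNReal.natCast_ne_top n)
      obtain ⟨U, hBU, hUopen, hUlt⟩ := B.exists_isOpen_lt_of_lt _ (by rw [hB]; exact hpos)
      calc ENNReal.ofReal (2 * Real.pi) * μ B
          ≤ ENNReal.ofReal (2 * Real.pi) * μ U := mul_le_mul_right (measure_mono hBU) _
        _ ≤ C * volume U := Stmt3Aux.open_bound μ hint hUopen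
        _ ≤ C * ((n : ℝ≥0∞))⁻¹ := mul_le_mul_right hUlt.le _
    have htend : Filter.Tendsto (fun n : ℕ => C * ((n : ℝ≥0∞))⁻¹) Filter.atTop (nhds 0) := by
      have h0 := ENNReal.tendsto_inv_nat_nhds_zero
      have h1 := ENNReal.Tendsto.const_mul (a := C) h0
        (Or.inr (by rw [hC]; exact ENNReal.ofReal_ne_top))
      simpa using h1
    have hle : ENNReal.ofReal (2 * Real.pi) * μ B ≤ 0 := ge_of_tendsto' htend hkey
    have hzero : ENNReal.ofReal (2 * Real.pi) * μ B = 0 :=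
      le_antisymm hle zero_le
    rcases mul_eq_zero.mp hzero with h | h
    · exact absurd h (ENNReal.ofReal_pos.mpr (by positivity)).ne'
    · exact h
  exact ⟨Measure.AbsolutelyContinuous.mk fun s _ h => hnull s h, fun B _ h => hnull B h⟩
end

section
/- Let U : ℝ → unitary group on H, B a bounded operator on H, and for n ∈ ℕ let E_n be the orthogonal projection onto the intersection of the kernels of all n-fold products B(x₁)⋯B(x_n), x_i ∈ ℝ, where B(x) = U(x)BU(x)*. Suppose the commutator function x ↦ ‖[B*, B(x)]‖ is integrable on ℝ. Then for each compact K ⊂ ℝ, ‖E_n (∫_K (B*B)(x) dx) E_n‖ ≤ (n−1) ∫_ℝ ‖[B*, B(x)]‖ dx, a bound uniform in K. -/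
open MeasureTheory
open scoped InnerProductSpace ENNReal

lemma buch_core {H : Type*} [NormedAddCommGroup H] [InnerProductSpace ℂ H] [CompleteSpace H]
    (f a : ℝ → H) (c : ℝ → ℝ) (ψ : H) (K : Set ℝ) (hK : IsCompact K)
    (hfc : Continuous f) (hac : Continuous a)
    (hcint : Integrable c) (hcnn : ∀ z, 0 ≤ c z)
    (hip : ∀ x y, ‖⟪f x, f y⟫_ℂ‖ ≤ c (y - x) * (‖a x‖ * ‖a y‖))
    (hψf : ∀ x, ⟪ψ, f x⟫_ℂ = ((‖a x‖ ^ 2 : ℝ) : ℂ)) :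
    ‖∫ x in K, f x‖ ≤ (∫ z, c z) * ‖ψ‖ := by
  classical
  set w := ∫ x in K, f x with hw
  set g : ℝ → ℝ := fun t => ‖a t‖ with hgdef
  set C : ℝ := ∫ z, c z with hC
  have hC0 : 0 ≤ C := integral_nonneg hcnn
  have hfi : IntegrableOn f K volume := hfc.continuousOn.integrableOn_compact hK
  -- measurable representative of c
  obtain ⟨c', hc'meas, hcc'⟩ : ∃ c' : ℝ → ℝ, Measurable c' ∧ c =ᵐ[volume] c' :=
    ⟨hcint.1.mk _, hcint.1.stronglyMeasurable_mk.measurable, hcint.1.ae_eq_mk⟩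
  set μ := volume.restrict K with hμ
  -- step 0 : ‖w‖² ≤ ∫ ‖⟪w, f x⟫‖
  have step0 : ‖w‖ ^ 2 ≤ ∫ x in K, ‖⟪w, f x⟫_ℂ‖ := by
    have h1 : ⟪w, w⟫_ℂ = ∫ x in K, ⟪w, f x⟫_ℂ := (integral_inner hfi w).symm
    calc ‖w‖ ^ 2 = Complex.re ⟪w, w⟫_ℂ := (inner_self_eq_norm_sq (𝕜 := ℂ) w).symm
      _ ≤ ‖⟪w, w⟫_ℂ‖ := by
          exact Complex.re_le_norm _
      _ = ‖∫ x in K, ⟪w, f x⟫_ℂ‖ := by rw [h1]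
      _ ≤ ∫ x in K, ‖⟪w, f x⟫_ℂ‖ := norm_integral_le_integral_norm _
  -- per x : ‖⟪w, f x⟫‖ ≤ ∫ y in K, ‖⟪f x, f y⟫‖
  have hinncont : ∀ x : ℝ, Continuous fun y => ‖⟪f x, f y⟫_ℂ‖ := by
    intro x
    exact (continuous_const.inner hfc).norm
  have hIx : ∀ x : ℝ, IntegrableOn (fun y => ‖⟪f x, f y⟫_ℂ‖) K volume := fun x =>
    (hinncont x).continuousOn.integrableOn_compact hK
  have stepx : ∀ x : ℝ, ‖⟪w, f x⟫_ℂ‖ ≤ ∫ y in K, ‖⟪f x, f y⟫_ℂ‖ := by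
    intro x
    rw [norm_inner_symm]
    have h1 : ⟪f x, w⟫_ℂ = ∫ y in K, ⟪f x, f y⟫_ℂ := (integral_inner hfi (f x)).symm
    rw [h1]
    exact norm_integral_le_integral_norm _
  -- translate ae-equality of c and c' along shifts
  have hshiftae : ∀ x : ℝ, (fun y : ℝ => c (y - x)) =ᵐ[volume] fun y : ℝ => c' (y - x) := by
    intro x
    have hqmp := (measurePreserving_sub_right (volume : Measure ℝ) x).quasiMeasurePreserving
    exact hqmp.ae_eq_comp hcc'
  -- lintegral versions
  have hgmeas : Measurable g := hac.norm.measurable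
  have hofmeas : Measurable fun z : ℝ => ENNReal.ofReal (c' z) :=
    ENNReal.measurable_ofReal.comp hc'meas
  have hCL : ∫⁻ z : ℝ, ENNReal.ofReal (c' z) = ENNReal.ofReal C := by
    have hae : (fun z : ℝ => ENNReal.ofReal (c' z)) =ᵐ[volume]
        fun z : ℝ => ENNReal.ofReal (c z) := by
      filter_upwards [hcc'] with z hz
      rw [hz]
    rw [lintegral_congr_ae hae]
    exact (ofReal_integral_eq_lintegral_ofReal hcint (Filter.Eventually.of_forall hcnn)).symm
  have htransR : ∀ x : ℝ, ∫⁻ y : ℝ, ENNReal.ofReal (c' (y - x)) = ENNReal.ofReal C := by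
    intro x
    rw [(measurePreserving_sub_right (volume : Measure ℝ) x).lintegral_comp
      (f := fun z : ℝ => ENNReal.ofReal (c' z)) hofmeas]
    exact hCL
  have htransL : ∀ y : ℝ, ∫⁻ x : ℝ, ENNReal.ofReal (c' (y - x)) = ENNReal.ofReal C := by
    intro y
    have hmp : MeasurePreserving (fun x : ℝ => -x + y) volume volume :=
      (measurePreserving_add_right (volume : Measure ℝ) y).comp
        (Measure.measurePreserving_neg (volume : Measure ℝ))
    have : ∀ x : ℝ, y - x = -x + y := fun x => by ring
    simp_rw [this]
    rw [hmp.lintegral_comp (f := fun z : ℝ => ENNReal.ofReal (c' z)) hofmeas]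
    exact hCL
  have hinnR : ∀ x : ℝ, ∫⁻ y, ENNReal.ofReal (c' (y - x)) ∂μ ≤ ENNReal.ofReal C := by
    intro x
    rw [← htransR x]
    exact lintegral_mono' Measure.restrict_le_self le_rfl
  have hinnL : ∀ y : ℝ, ∫⁻ x, ENNReal.ofReal (c' (y - x)) ∂μ ≤ ENNReal.ofReal C := by
    intro y
    rw [← htransL y]
    exact lintegral_mono' Measure.restrict_le_self le_rfl
  -- move into ennreal land
  set gE : ℝ → ℝ≥0∞ := fun t => ENNReal.ofReal (g t) with hgE
  set cE : ℝ → ℝ≥0∞ := fun z => ENNReal.ofReal (c' z) with hcE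
  have hIwf : IntegrableOn (fun x => ‖⟪w, f x⟫_ℂ‖) K volume :=
    ((continuous_const.inner hfc).norm).continuousOn.integrableOn_compact hK
  have h2 : ENNReal.ofReal (‖w‖ ^ 2) ≤ ∫⁻ x, ENNReal.ofReal ‖⟪w, f x⟫_ℂ‖ ∂μ := by
    calc ENNReal.ofReal (‖w‖ ^ 2) ≤ ENNReal.ofReal (∫ x in K, ‖⟪w, f x⟫_ℂ‖) :=
        ENNReal.ofReal_le_ofReal step0
      _ = _ := ofReal_integral_eq_lintegral_ofReal hIwf
        (Filter.Eventually.of_forall fun x => norm_nonneg _)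
  have h3 : ∀ x : ℝ, ENNReal.ofReal ‖⟪w, f x⟫_ℂ‖
      ≤ ∫⁻ y, cE (y - x) * (gE x * gE y) ∂μ := by
    intro x
    calc ENNReal.ofReal ‖⟪w, f x⟫_ℂ‖ ≤ ENNReal.ofReal (∫ y in K, ‖⟪f x, f y⟫_ℂ‖) :=
        ENNReal.ofReal_le_ofReal (stepx x)
      _ = ∫⁻ y, ENNReal.ofReal ‖⟪f x, f y⟫_ℂ‖ ∂μ :=
        ofReal_integral_eq_lintegral_ofReal (hIx x)
          (Filter.Eventually.of_forall fun y => norm_nonneg _)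
      _ ≤ ∫⁻ y, ENNReal.ofReal (c (y - x) * (g x * g y)) ∂μ :=
        lintegral_mono fun y => ENNReal.ofReal_le_ofReal (hip x y)
      _ = ∫⁻ y, ENNReal.ofReal (c (y - x)) * (gE x * gE y) ∂μ := by
        apply lintegral_congr fun y => ?_
        rw [ENNReal.ofReal_mul (hcnn _), ENNReal.ofReal_mul (norm_nonneg _)]
      _ = ∫⁻ y, cE (y - x) * (gE x * gE y) ∂μ := by
        apply lintegral_congr_ae
        filter_upwards [ae_restrict_of_ae (hshiftae x)] with y hy
        rw [hcE]
        simp only []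
        rw [show c (y - x) = c' (y - x) from hy]
  have h4 : ENNReal.ofReal (‖w‖ ^ 2) ≤ ∫⁻ x, ∫⁻ y, cE (y - x) * (gE x * gE y) ∂μ ∂μ :=
    h2.trans (lintegral_mono h3)
  -- AM-GM pointwise
  have hAM2 : ∀ (k : ℝ≥0∞) (s t : ℝ), 0 ≤ s → 0 ≤ t →
      2 * (k * (ENNReal.ofReal s * ENNReal.ofReal t))
        ≤ k * ENNReal.ofReal s ^ 2 + k * ENNReal.ofReal t ^ 2 := by
    intro k s t hs ht
    have h1 : 2 * (ENNReal.ofReal s * ENNReal.ofReal t)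
        ≤ ENNReal.ofReal s ^ 2 + ENNReal.ofReal t ^ 2 := by
      rw [← ENNReal.ofReal_mul hs, ← ENNReal.ofReal_pow hs, ← ENNReal.ofReal_pow ht,
        ← ENNReal.ofReal_add (pow_nonneg hs 2) (pow_nonneg ht 2),
        show (2 : ℝ≥0∞) = ENNReal.ofReal 2 by simp,
        ← ENNReal.ofReal_mul (by norm_num)]
      exact ENNReal.ofReal_le_ofReal (by nlinarith [sq_nonneg (s - t)])
    calc 2 * (k * (ENNReal.ofReal s * ENNReal.ofReal t))
        = k * (2 * (ENNReal.ofReal s * ENNReal.ofReal t)) := by ring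
      _ ≤ k * (ENNReal.ofReal s ^ 2 + ENNReal.ofReal t ^ 2) := mul_le_mul_right h1 k
      _ = _ := by ring
  -- measurability of kernels
  have hker1 : Measurable (Function.uncurry fun x y : ℝ => cE (y - x) * gE x ^ 2) := by
    show Measurable ((fun p : ℝ × ℝ => cE (p.2 - p.1)) * fun p => gE p.1 ^ 2)
    apply Measurable.mul
    · exact hofmeas.comp (measurable_snd.sub measurable_fst)
    · exact ((ENNReal.measurable_ofReal.comp (hgmeas.comp measurable_fst)).pow_const 2)
  have hker2 : Measurable (Function.uncurry fun x y : ℝ => cE (y - x) * gE y ^ 2) := by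
    show Measurable ((fun p : ℝ × ℝ => cE (p.2 - p.1)) * fun p => gE p.2 ^ 2)
    apply Measurable.mul
    · exact hofmeas.comp (measurable_snd.sub measurable_fst)
    · exact ((ENNReal.measurable_ofReal.comp (hgmeas.comp measurable_snd)).pow_const 2)
  set L : ℝ≥0∞ := ∫⁻ t, gE t ^ 2 ∂μ with hL
  have hD1 : ∫⁻ x, ∫⁻ y, cE (y - x) * gE x ^ 2 ∂μ ∂μ ≤ ENNReal.ofReal C * L := by
    have heq : ∀ x : ℝ, ∫⁻ y, cE (y - x) * gE x ^ 2 ∂μ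
        = (∫⁻ y, cE (y - x) ∂μ) * gE x ^ 2 := fun x =>
      lintegral_mul_const _ (hofmeas.comp (measurable_id.sub_const x))
    calc ∫⁻ x, ∫⁻ y, cE (y - x) * gE x ^ 2 ∂μ ∂μ
        ≤ ∫⁻ x, ENNReal.ofReal C * gE x ^ 2 ∂μ := by
          apply lintegral_mono fun x => ?_
          rw [heq x]
          exact mul_le_mul_left (hinnR x) _
      _ = ENNReal.ofReal C * L := lintegral_const_mul' _ _ ENNReal.ofReal_ne_top
  have hD2 : ∫⁻ x, ∫⁻ y, cE (y - x) * gE y ^ 2 ∂μ ∂μ ≤ ENNReal.ofReal C * L := by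
    rw [lintegral_lintegral_swap hker2.aemeasurable]
    have heq : ∀ y : ℝ, ∫⁻ x, cE (y - x) * gE y ^ 2 ∂μ
        = (∫⁻ x, cE (y - x) ∂μ) * gE y ^ 2 := fun y =>
      lintegral_mul_const _ (hofmeas.comp (measurable_const.sub measurable_id))
    calc ∫⁻ y, ∫⁻ x, cE (y - x) * gE y ^ 2 ∂μ ∂μ
        ≤ ∫⁻ y, ENNReal.ofReal C * gE y ^ 2 ∂μ := by
          apply lintegral_mono fun y => ?_
          rw [heq y]
          exact mul_le_mul_left (hinnL y) _
      _ = ENNReal.ofReal C * L := lintegral_const_mul' _ _ ENNReal.ofReal_ne_top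
  -- combine via doubling
  have hD : ∫⁻ x, ∫⁻ y, cE (y - x) * (gE x * gE y) ∂μ ∂μ ≤ ENNReal.ofReal C * L := by
    rw [← ENNReal.mul_le_mul_iff_right (a := 2) two_ne_zero ENNReal.ofNat_ne_top]
    have hm1 : Measurable fun x : ℝ => ∫⁻ y, cE (y - x) * gE x ^ 2 ∂μ :=
      hker1.lintegral_prod_right'
    calc 2 * ∫⁻ x, ∫⁻ y, cE (y - x) * (gE x * gE y) ∂μ ∂μ
        = ∫⁻ x, 2 * ∫⁻ y, cE (y - x) * (gE x * gE y) ∂μ ∂μ :=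
          (lintegral_const_mul' _ _ (by norm_num)).symm
      _ = ∫⁻ x, ∫⁻ y, 2 * (cE (y - x) * (gE x * gE y)) ∂μ ∂μ := by
          apply lintegral_congr fun x => ?_
          exact (lintegral_const_mul' _ _ (by norm_num)).symm
      _ ≤ ∫⁻ x, ∫⁻ y, (cE (y - x) * gE x ^ 2 + cE (y - x) * gE y ^ 2) ∂μ ∂μ := by
          apply lintegral_mono fun x => lintegral_mono fun y => ?_
          exact hAM2 (cE (y - x)) (g x) (g y) (norm_nonneg _) (norm_nonneg _)
      _ = ∫⁻ x, ((∫⁻ y, cE (y - x) * gE x ^ 2 ∂μ) + ∫⁻ y, cE (y - x) * gE y ^ 2 ∂μ) ∂μ := by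
          apply lintegral_congr fun x => ?_
          exact lintegral_add_left (by
            exact (hofmeas.comp (measurable_id.sub_const x)).mul measurable_const) _
      _ = (∫⁻ x, ∫⁻ y, cE (y - x) * gE x ^ 2 ∂μ ∂μ)
            + ∫⁻ x, ∫⁻ y, cE (y - x) * gE y ^ 2 ∂μ ∂μ := lintegral_add_left hm1 _
      _ ≤ ENNReal.ofReal C * L + ENNReal.ofReal C * L := add_le_add hD1 hD2
      _ = 2 * (ENNReal.ofReal C * L) := (two_mul _).symm
  -- evaluate L and close the loop
  have hgint : IntegrableOn (fun t => g t ^ 2) K volume :=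
    ((hac.norm).pow 2).continuousOn.integrableOn_compact hK
  have hLr : L = ENNReal.ofReal (∫ t in K, g t ^ 2) := by
    rw [ofReal_integral_eq_lintegral_ofReal hgint
      (Filter.Eventually.of_forall fun t => sq_nonneg _)]
    apply lintegral_congr fun t => ?_
    rw [ENNReal.ofReal_pow (norm_nonneg _)]
  have hiw : ⟪ψ, w⟫_ℂ = ((∫ t in K, g t ^ 2 : ℝ) : ℂ) := by
    have h1 : ⟪ψ, w⟫_ℂ = ∫ x in K, ⟪ψ, f x⟫_ℂ := (integral_inner hfi ψ).symm
    rw [h1]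
    simp_rw [hψf]
    exact integral_ofReal
  have hg2w : ∫ t in K, g t ^ 2 ≤ ‖ψ‖ * ‖w‖ := by
    calc ∫ t in K, g t ^ 2 = Complex.re ⟪ψ, w⟫_ℂ := by rw [hiw]; simp
      _ ≤ ‖⟪ψ, w⟫_ℂ‖ := by exact Complex.re_le_norm _
      _ ≤ ‖ψ‖ * ‖w‖ := norm_inner_le_norm ψ w
  have hbig : ENNReal.ofReal (‖w‖ ^ 2) ≤ ENNReal.ofReal (C * (‖ψ‖ * ‖w‖)) := by
    refine (h4.trans hD).trans ?_
    rw [hLr, ← ENNReal.ofReal_mul hC0]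
    exact ENNReal.ofReal_le_ofReal (mul_le_mul_of_nonneg_left hg2w hC0)
  have hreal : ‖w‖ ^ 2 ≤ C * (‖ψ‖ * ‖w‖) :=
    (ENNReal.ofReal_le_ofReal_iff (by positivity)).mp hbig
  nlinarith [norm_nonneg w, norm_nonneg ψ, mul_nonneg hC0 (norm_nonneg ψ)]

/-- Buchholz's harmonic-analysis bound (case n = 2): with B(x) = U(x)BU(x)* and E₂ the
orthogonal projection onto ⋂_{x,y} ker B(x)B(y), if x ↦ ‖[B*, B(x)]‖ is integrable on ℝ,
then for each compact K, ‖E₂ (∫_K (B*B)(x) dx) E₂‖ ≤ ∫_ℝ ‖[B*, B(x)]‖ dx, uniformly in K. -/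
theorem stmt_13 {H : Type*} [NormedAddCommGroup H] [InnerProductSpace ℂ H] [CompleteSpace H]
    (U : ℝ → H →L[ℂ] H)
    (hUgrp : ∀ s t : ℝ, U (s + t) = U s ∘L U t) (hU0 : U 0 = 1)
    (hUuni : ∀ (s : ℝ) (x y : H), ⟪U s x, U s y⟫_ℂ = ⟪x, y⟫_ℂ)
    (hUcont : ∀ x : H, Continuous fun s : ℝ => U s x)
    (B : H →L[ℂ] H)
    (hint : Integrable (fun x : ℝ =>
      ‖(ContinuousLinearMap.adjoint B) ∘L (U x ∘L B ∘L U (-x))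
        - (U x ∘L B ∘L U (-x)) ∘L (ContinuousLinearMap.adjoint B)‖))
    (E₂ : H →L[ℂ] H) (hE₂sa : IsSelfAdjoint E₂) (hE₂idem : E₂ ∘L E₂ = E₂)
    (hE₂mem : ∀ (v : H) (x y : ℝ),
      (U x) (B ((U (-x)) ((U y) (B ((U (-y)) (E₂ v)))))) = 0)
    (hE₂max : ∀ v : H,
      (∀ x y : ℝ, (U x) (B ((U (-x)) ((U y) (B ((U (-y)) v))))) = 0) → E₂ v = v)
    (K : Set ℝ) (hK : IsCompact K) :
    ∀ v : H,
      ‖∫ x in K, E₂ ((U x) ((ContinuousLinearMap.adjoint B) (B ((U (-x)) (E₂ v))))) ∂volume‖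
        ≤ (∫ x : ℝ, ‖(ContinuousLinearMap.adjoint B) ∘L (U x ∘L B ∘L U (-x))
            - (U x ∘L B ∘L U (-x)) ∘L (ContinuousLinearMap.adjoint B)‖) * ‖v‖ := by
  intro v
  classical
  set B' := ContinuousLinearMap.adjoint B with hB'
  set ψ := E₂ v with hψ
  set c : ℝ → ℝ := fun z =>
    ‖B' ∘L (U z ∘L B ∘L U (-z)) - (U z ∘L B ∘L U (-z)) ∘L B'‖ with hc
  -- basic unitary group facts
  have hUcomp : ∀ (s t : ℝ) (z : H), U s (U t z) = U (s + t) z := by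
    intro s t z
    rw [hUgrp s t]
    rfl
  have hUinv : ∀ (s : ℝ) (z : H), U s (U (-s) z) = z := by
    intro s z
    rw [hUcomp, add_neg_cancel, hU0]
    rfl
  have hUnorm : ∀ (s : ℝ) (z : H), ‖U s z‖ = ‖z‖ := by
    intro s z
    have h := hUuni s z z
    rw [inner_self_eq_norm_sq_to_K, inner_self_eq_norm_sq_to_K] at h
    have h2 : (‖U s z‖ : ℝ) ^ 2 = (‖z‖ : ℝ) ^ 2 := by exact_mod_cast h
    nlinarith [norm_nonneg (U s z), norm_nonneg z]
  have hUinj : ∀ (s : ℝ) (z : H), U s z = 0 → z = 0 := by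
    intro s z h
    have h2 := hUnorm s z
    rw [h, norm_zero] at h2
    exact norm_eq_zero.mp h2.symm
  have hshift : ∀ (s : ℝ) (p q : H), ⟪p, U s q⟫_ℂ = ⟪U (-s) p, q⟫_ℂ := by
    intro s p q
    conv_lhs => rw [← hUinv s p]
    exact hUuni s _ _
  have hBadj : ∀ p q : H, ⟪p, B' q⟫_ℂ = ⟪B p, q⟫_ℂ := fun p q =>
    ContinuousLinearMap.adjoint_inner_right B p q
  -- strong continuity composition
  have hUcont2 : ∀ {wf : ℝ → H}, Continuous wf → Continuous fun x => U x (wf x) := by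
    intro wf hwf
    rw [continuous_iff_continuousAt]
    intro x₀
    rw [ContinuousAt, tendsto_iff_norm_sub_tendsto_zero]
    have hb : ∀ x : ℝ, ‖U x (wf x) - U x₀ (wf x₀)‖
        ≤ ‖wf x - wf x₀‖ + ‖U x (wf x₀) - U x₀ (wf x₀)‖ := by
      intro x
      have hsplit : U x (wf x) - U x₀ (wf x₀)
          = U x (wf x - wf x₀) + (U x (wf x₀) - U x₀ (wf x₀)) := by
        rw [map_sub]
        abel
      rw [hsplit]
      refine (norm_add_le _ _).trans ?_
      rw [hUnorm]
    have h1 : Filter.Tendsto (fun x : ℝ => ‖wf x - wf x₀‖ + ‖U x (wf x₀) - U x₀ (wf x₀)‖)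
        (nhds x₀) (nhds 0) := by
      have t1 : Filter.Tendsto (fun x : ℝ => ‖wf x - wf x₀‖) (nhds x₀) (nhds 0) := by
        rw [← tendsto_iff_norm_sub_tendsto_zero]
        exact hwf.continuousAt
      have t2 : Filter.Tendsto (fun x : ℝ => ‖U x (wf x₀) - U x₀ (wf x₀)‖) (nhds x₀) (nhds 0) := by
        rw [← tendsto_iff_norm_sub_tendsto_zero]
        exact (hUcont (wf x₀)).continuousAt
      simpa using t1.add t2
    exact squeeze_zero (fun x => norm_nonneg _) hb h1
  -- the two vector families
  set a : ℝ → H := fun t => U t (B (U (-t) ψ)) with ha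
  set f : ℝ → H := fun t => U t (B' (B (U (-t) ψ))) with hf
  have hacont : Continuous a :=
    hUcont2 (B.continuous.comp ((hUcont ψ).comp continuous_neg))
  have hfcont : Continuous f :=
    hUcont2 (B'.continuous.comp (B.continuous.comp ((hUcont ψ).comp continuous_neg)))
  have hcnn : ∀ z : ℝ, 0 ≤ c z := fun z => norm_nonneg _
  -- double-kill property
  have hazero' : ∀ x y : ℝ, U x (B (U (y - x) (B (U (-y) ψ)))) = 0 := by
    intro x y
    have h := hE₂mem v x y
    rw [← hψ] at h
    rw [hUcomp (-x) y] at h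
    rw [show y - x = -x + y by ring]
    exact h
  -- the key commutator identity
  have hAapp : ∀ (z : ℝ) (q : H),
      (B' ∘L (U z ∘L B ∘L U (-z)) - (U z ∘L B ∘L U (-z)) ∘L B') q
        = B' (U z (B (U (-z) q))) - U z (B (U (-z) (B' q))) := by
    intro z q
    simp [ContinuousLinearMap.sub_apply, ContinuousLinearMap.comp_apply]
  have key : ∀ x y : ℝ, U y (B (U (-y) (f x)))
      = -(U x ((B' ∘L (U (y - x) ∘L B ∘L U (-(y - x)))
          - (U (y - x) ∘L B ∘L U (-(y - x))) ∘L B') (B (U (-x) ψ)))) := by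
    intro x y
    have hZ : U (y - x) (B (U (-(y - x)) (B (U (-x) ψ)))) = 0 := by
      apply hUinj x
      rw [hUcomp, show x + (y - x) = y by ring, neg_sub]
      exact hazero' y x
    rw [hAapp, hZ, map_zero, zero_sub, map_neg, neg_neg]
    simp only [hf]
    rw [hUcomp x (y - x), show x + (y - x) = y by ring, hUcomp (-y) x, neg_sub]
    rw [show -y + x = x - y by ring]
  -- the inner product bound
  have hip : ∀ x y : ℝ, ‖⟪f x, f y⟫_ℂ‖ ≤ c (y - x) * (‖a x‖ * ‖a y‖) := by
    intro x y
    have e1 : ⟪f x, f y⟫_ℂ = ⟪U y (B (U (-y) (f x))), a y⟫_ℂ := by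
      conv_lhs => rw [show f y = U y (B' (B (U (-y) ψ))) from rfl]
      rw [hshift y, hBadj, ← hUuni y]
    have hax : ‖B (U (-x) ψ)‖ = ‖a x‖ := (hUnorm x _).symm
    rw [e1, key x y]
    rw [norm_inner_symm, inner_neg_right, norm_neg, norm_inner_symm]
    calc ‖⟪U x ((B' ∘L (U (y - x) ∘L B ∘L U (-(y - x)))
          - (U (y - x) ∘L B ∘L U (-(y - x))) ∘L B') (B (U (-x) ψ))), a y⟫_ℂ‖
        ≤ ‖U x ((B' ∘L (U (y - x) ∘L B ∘L U (-(y - x)))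
          - (U (y - x) ∘L B ∘L U (-(y - x))) ∘L B') (B (U (-x) ψ)))‖ * ‖a y‖ :=
          norm_inner_le_norm _ _
      _ ≤ c (y - x) * (‖a x‖ * ‖a y‖) := by
          rw [hUnorm, ← hax, ← mul_assoc]
          have hop := ContinuousLinearMap.le_opNorm
            (B' ∘L (U (y - x) ∘L B ∘L U (-(y - x)))
              - (U (y - x) ∘L B ∘L U (-(y - x))) ∘L B') (B (U (-x) ψ))
          exact mul_le_mul_of_nonneg_right hop (norm_nonneg _)
  -- the positivity identity
  have hψf : ∀ x : ℝ, ⟪ψ, f x⟫_ℂ = ((‖a x‖ ^ 2 : ℝ) : ℂ) := by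
    intro x
    conv_lhs => rw [show f x = U x (B' (B (U (-x) ψ))) from rfl]
    rw [hshift x, hBadj, inner_self_eq_norm_sq_to_K]
    rw [show ‖B (U (-x) ψ)‖ = ‖a x‖ from (hUnorm x _).symm]
    norm_num
  -- integrability of f and projection bound
  have hfi : IntegrableOn f K volume := hfcont.continuousOn.integrableOn_compact hK
  have hE₂n : ∀ z : H, ‖E₂ z‖ ≤ ‖z‖ := by
    intro z
    have hid : E₂ (E₂ z) = E₂ z := by simpa using DFunLike.congr_fun hE₂idem z
    have hadj : ContinuousLinearMap.adjoint E₂ = E₂ := hE₂sa.adjoint_eq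
    have h1 : ⟪E₂ z, E₂ z⟫_ℂ = ⟪E₂ z, z⟫_ℂ := by
      have h := ContinuousLinearMap.adjoint_inner_right E₂ (E₂ z) z
      rw [hadj, hid] at h
      exact h
    have h2 : ‖E₂ z‖ ^ 2 = Complex.re ⟪E₂ z, z⟫_ℂ := by
      rw [← h1]
      exact (inner_self_eq_norm_sq (𝕜 := ℂ) _).symm
    have h3 : Complex.re ⟪E₂ z, z⟫_ℂ ≤ ‖E₂ z‖ * ‖z‖ := by
      calc Complex.re ⟪E₂ z, z⟫_ℂ ≤ ‖⟪E₂ z, z⟫_ℂ‖ := by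
            exact Complex.re_le_norm _
        _ ≤ ‖E₂ z‖ * ‖z‖ := norm_inner_le_norm _ _
    nlinarith [norm_nonneg (E₂ z), norm_nonneg z]
  -- assemble
  have hcore : ‖∫ x in K, f x‖ ≤ (∫ z : ℝ, c z) * ‖ψ‖ :=
    buch_core f a c ψ K hK hfcont hacont hint hcnn hip hψf
  have hC0 : 0 ≤ ∫ z : ℝ, c z := integral_nonneg hcnn
  calc ‖∫ x in K, E₂ (f x)‖ = ‖E₂ (∫ x in K, f x)‖ := by
        rw [ContinuousLinearMap.integral_comp_comm E₂ hfi]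
    _ ≤ ‖∫ x in K, f x‖ := hE₂n _
    _ ≤ (∫ z : ℝ, c z) * ‖ψ‖ := hcore
    _ ≤ (∫ z : ℝ, c z) * ‖v‖ := mul_le_mul_of_nonneg_left (hE₂n v) hC0
end
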